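/- arXiv:2206.01686 — 6 statements merged into one kernel-verified Lean document; each statement's English description precedes it below -/
import Mathlib

section
/- Uniqueness in the generalized stochastic sewing lemma (Theorem 1.1, uniqueness part). Under the standing hypotheses (H), suppose (𝒜_t)_{t ∈ [0,T]} and (𝒜'_t)_{t ∈ [0,T]} are ℝ^d-valued processes, each with value 0 at time 0, each ℱ_t-measurable and in L^m(P) at every time t, and suppose each of them satisfies, for some nonnegative constants C1, C2, C3 (possibly different for the two processes): ‖E[𝒜_{t2} − 𝒜_{t1} − A_{t1,t2} | ℱ_{t0}]‖_{L^m(P)} ≤ C1 (t1 − t0)^{−α}(t2 − t1)^{β1} whenever 0 ≤ t0 < t1 < t2 ≤ T and M(t2 − t1) ≤ t1 − t0, and ‖𝒜_{t2} − 𝒜_{t1} − A_{t1,t2}‖_{L^m(P)} ≤ C2 (t2 − t1)^{β1−α} + C3 (t2 − t1)^{β2} for all 0 ≤ t1 < t2 ≤ T. Then for every t ∈ [0,T], 𝒜_t = 𝒜'_t almost surely. -/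
open MeasureTheory Filter Topology
open scoped ENNReal

section Helpers

variable {Ω : Type*} {m m0 : MeasurableSpace Ω} {P : Measure Ω}

/-- Conditional expectation commutes with continuous linear maps. -/
lemma condexp_clm_comm {E F : Type*} [NormedAddCommGroup E] [NormedSpace ℝ E] [CompleteSpace E]
    [NormedAddCommGroup F] [NormedSpace ℝ F] [CompleteSpace F]
    (hm : m ≤ m0) [SigmaFinite (P.trim hm)] (L : E →L[ℝ] F) {f : Ω → E}
    (hf : Integrable f P) :
    P[fun ω => L (f ω)|m] =ᵐ[P] fun ω => L ((P[f|m]) ω) := by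
  refine (ae_eq_condExp_of_forall_setIntegral_eq hm (L.integrable_comp hf)
    (fun s _ _ => (L.integrable_comp integrable_condExp).integrableOn)
    (fun s hs hμs => ?_)
    (StronglyMeasurable.aestronglyMeasurable (L.continuous.comp_stronglyMeasurable stronglyMeasurable_condExp))).symm
  calc ∫ x in s, L ((P[f|m]) x) ∂P = L (∫ x in s, (P[f|m]) x ∂P) :=
        (L.integral_comp_comm integrable_condExp.integrableOn)
    _ = L (∫ x in s, f x ∂P) := by rw [setIntegral_condExp hm hf hs]
    _ = ∫ x in s, L (f x) ∂P := (L.integral_comp_comm hf.integrableOn).symm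

lemma integrable_mul_of_memL2 {f g : Ω → ℝ} (hf : MemLp f 2 P) (hg : MemLp g 2 P) :
    Integrable (fun ω => f ω * g ω) P := by
  have h := L2.integrable_inner (𝕜 := ℝ) (hf.toLp f) (hg.toLp g)
  refine h.congr ?_
  filter_upwards [hf.coeFn_toLp, hg.coeFn_toLp] with x h1 h2
  simp [RCLike.inner_apply, h1, h2, mul_comm]

lemma integral_sq_le_of_eLpNorm_le {f : Ω → ℝ} (hf : MemLp f 2 P) {b : ℝ} (hb : 0 ≤ b)
    (h : eLpNorm f 2 P ≤ ENNReal.ofReal b) : ∫ ω, (f ω) ^ 2 ∂P ≤ b ^ 2 := by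
  have h1 : ∫ ω, (f ω) ^ 2 ∂P = ‖hf.toLp f‖ ^ 2 := by
    rw [← real_inner_self_eq_norm_sq, L2.inner_def]
    refine integral_congr_ae ?_
    filter_upwards [hf.coeFn_toLp] with x hx
    simp [RCLike.inner_apply, hx, sq]
  rw [h1]
  have h2 : ‖hf.toLp f‖ ≤ b := by
    rw [Lp.norm_toLp]
    exact ENNReal.toReal_le_of_le_ofReal hb h
  exact pow_le_pow_left₀ (norm_nonneg _) h2 2

lemma euclid_coord_abs_le {d : ℕ} (x : EuclideanSpace ℝ (Fin d)) (i : Fin d) : |x i| ≤ ‖x‖ := by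
  rw [EuclideanSpace.norm_eq]
  have h1 : |x i| = Real.sqrt (‖x i‖ ^ 2) := by
    rw [Real.sqrt_sq_eq_abs, abs_norm, Real.norm_eq_abs]
  rw [h1]
  refine Real.sqrt_le_sqrt ?_
  exact Finset.single_le_sum (f := fun j => ‖x j‖ ^ 2) (fun j _ => sq_nonneg _)
    (Finset.mem_univ i)

set_option maxHeartbeats 1000000 in
lemma sewing_core
    (P : Measure Ω) [IsProbabilityMeasure P] (ℱ : Filtration ℝ m0) (T : ℝ)
    (M α β1 c1 c2 c3 e1 e2 : ℝ)
    (hα : 0 ≤ α) (hβ1 : 1 < β1) (hc1 : 0 ≤ c1) (hc2 : 0 ≤ c2) (hc3 : 0 ≤ c3)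
    (he1 : 1 / 2 < e1) (he2 : 1 / 2 < e2)
    (Z : ℝ → Ω → ℝ)
    (hZ0 : ∀ ω, Z 0 ω = 0)
    (hZmeas : ∀ r, 0 ≤ r → r ≤ T → StronglyMeasurable[ℱ r] (Z r))
    (hZmem : ∀ r, 0 ≤ r → r ≤ T → MemLp (Z r) 2 P)
    (hZcond : ∀ s u v, 0 ≤ s → s < u → u < v → v ≤ T → M * (v - u) ≤ u - s →
      eLpNorm (P[fun ω => Z v ω - Z u ω|ℱ s]) 2 P
        ≤ ENNReal.ofReal (c1 * (u - s) ^ (-α) * (v - u) ^ β1))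
    (hZpath : ∀ u v, 0 ≤ u → u < v → v ≤ T →
      eLpNorm (fun ω => Z v ω - Z u ω) 2 P
        ≤ ENNReal.ofReal (c2 * (v - u) ^ e1 + c3 * (v - u) ^ e2)) :
    ∀ t, 0 ≤ t → t ≤ T → Z t =ᵐ[P] 0 := by
  have Zint : ∀ r, 0 ≤ r → r ≤ T → Integrable (Z r) P :=
    fun r h1 h2 => (hZmem r h1 h2).integrable one_le_two
  -- Step C : conditional increments vanish
  have stepC : ∀ s u v, 0 ≤ s → s < u → u < v → v ≤ T →
      P[fun ω => Z v ω - Z u ω|ℱ s] =ᵐ[P] 0 := by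
    intro s u v hs hsu huv hvT
    set X := P[fun ω => Z v ω - Z u ω|ℱ s] with hX
    have hXmeas : AEStronglyMeasurable X P :=
      (stronglyMeasurable_condExp.mono (ℱ.le s)).aestronglyMeasurable
    have hus : 0 < u - s := sub_pos.mpr hsu
    have hvu : 0 < v - u := sub_pos.mpr huv
    set K := c1 * (u - s) ^ (-α) * (v - u) ^ β1 with hK
    have hbound : ∀ᶠ N : ℕ in atTop,
        eLpNorm X 2 P ≤ ENNReal.ofReal (K * (N : ℝ) ^ (1 - β1)) := by
      have hev : ∀ᶠ N : ℕ in atTop, M * (v - u) ≤ (N : ℝ) * (u - s) ∧ 1 ≤ N := by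
        refine eventually_atTop.2 ⟨max 1 ⌈M * (v - u) / (u - s)⌉₊, fun N hN => ?_⟩
        have h1 : (1 : ℕ) ≤ N := le_trans (le_max_left _ _) hN
        have h2 : (⌈M * (v - u) / (u - s)⌉₊ : ℝ) ≤ N :=
          Nat.cast_le.mpr (le_trans (le_max_right _ _) hN)
        refine ⟨?_, h1⟩
        have h3 : M * (v - u) / (u - s) ≤ N := (Nat.le_ceil _).trans h2
        calc M * (v - u) = M * (v - u) / (u - s) * (u - s) := by field_simp
          _ ≤ N * (u - s) := mul_le_mul_of_nonneg_right h3 hus.le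
      filter_upwards [hev] with N hN
      obtain ⟨hMN, hN1⟩ := hN
      have hN0 : (0 : ℝ) < N := by exact_mod_cast hN1
      set h := (v - u) / N with hh
      have hh0 : 0 < h := div_pos hvu hN0
      set p : ℕ → ℝ := fun k => u + k * h with hp
      have hp0 : p 0 = u := by simp [hp]
      have hpN : p N = v := by
        simp only [hp, hh]; field_simp; ring
      have hpmono : ∀ k l : ℕ, k ≤ l → p k ≤ p l := by
        intro k l hkl
        simp only [hp]
        have hcast : (k : ℝ) ≤ l := Nat.cast_le.mpr hkl
        nlinarith
      have hpge : ∀ k : ℕ, u ≤ p k := by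
        intro k
        simp only [hp]
        nlinarith [Nat.cast_nonneg (α := ℝ) k]
      have hple : ∀ k : ℕ, k ≤ N → p k ≤ v := fun k hk => hpN ▸ hpmono k N hk
      have hInt : ∀ k : ℕ, k ≤ N → Integrable (Z (p k)) P := fun k hk =>
        Zint (p k) (hs.trans (hsu.le.trans (hpge k))) ((hple k hk).trans hvT)
      have hstep : ∀ k : ℕ, p (k + 1) - p k = h := by
        intro k; simp only [hp, Nat.cast_add, Nat.cast_one]; ring
      have htel : (fun ω => Z v ω - Z u ω)
          = ∑ k ∈ Finset.range N, fun ω => Z (p (k + 1)) ω - Z (p k) ω := by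
        funext ω
        rw [Finset.sum_apply]
        rw [← hp0, ← hpN, ← Finset.sum_range_sub (f := fun k => Z (p k) ω)]
      have hce : X =ᵐ[P] ∑ k ∈ Finset.range N, P[fun ω => Z (p (k + 1)) ω - Z (p k) ω|ℱ s] := by
        rw [hX, htel]
        exact condExp_finsetSum (m := ℱ s) fun k hk =>
          (hInt (k + 1) (Finset.mem_range.mp hk)).sub (hInt k (Finset.mem_range.mp hk).le)
      have hterm : ∀ k ∈ Finset.range N,
          eLpNorm (P[fun ω => Z (p (k + 1)) ω - Z (p k) ω|ℱ s]) 2 P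
            ≤ ENNReal.ofReal (c1 * (u - s) ^ (-α) * h ^ β1) := by
        intro k hk
        have hkN : k + 1 ≤ N := Finset.mem_range.mp hk
        have hpk : s < p k := lt_of_lt_of_le hsu (hpge k)
        have h1 : p k < p (k + 1) := by have := hstep k; linarith
        have h2 : p (k + 1) ≤ T := (hple _ hkN).trans hvT
        have hMh : M * h ≤ u - s := by
          rw [hh, ← mul_div_assoc, div_le_iff₀ hN0]
          linarith
        have h3 : M * (p (k + 1) - p k) ≤ p k - s := by
          rw [hstep k]
          have := hpge k
          linarith
        refine (hZcond s (p k) (p (k + 1)) hs hpk h1 h2 h3).trans ?_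
        rw [hstep k]
        refine ENNReal.ofReal_le_ofReal ?_
        have hmono : (p k - s) ^ (-α) ≤ (u - s) ^ (-α) :=
          Real.rpow_le_rpow_of_nonpos hus (by linarith [hpge k]) (neg_nonpos.mpr hα)
        exact mul_le_mul_of_nonneg_right (mul_le_mul_of_nonneg_left hmono hc1)
          (Real.rpow_nonneg hh0.le _)
      calc eLpNorm X 2 P
          = eLpNorm (∑ k ∈ Finset.range N,
              P[fun ω => Z (p (k + 1)) ω - Z (p k) ω|ℱ s]) 2 P := eLpNorm_congr_ae hce
        _ ≤ ∑ k ∈ Finset.range N,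
              eLpNorm (P[fun ω => Z (p (k + 1)) ω - Z (p k) ω|ℱ s]) 2 P :=
            eLpNorm_sum_le (fun k _ =>
              (stronglyMeasurable_condExp.mono (ℱ.le s)).aestronglyMeasurable) one_le_two
        _ ≤ ∑ _k ∈ Finset.range N, ENNReal.ofReal (c1 * (u - s) ^ (-α) * h ^ β1) :=
            Finset.sum_le_sum hterm
        _ = N * ENNReal.ofReal (c1 * (u - s) ^ (-α) * h ^ β1) := by
            rw [Finset.sum_const, Finset.card_range, nsmul_eq_mul]
        _ = ENNReal.ofReal (K * (N : ℝ) ^ (1 - β1)) := by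
            rw [← ENNReal.ofReal_natCast N, ← ENNReal.ofReal_mul (Nat.cast_nonneg N)]
            congr 1
            rw [hh, Real.div_rpow hvu.le hN0.le, Real.rpow_sub hN0, Real.rpow_one, hK]
            ring
    have hlim : Tendsto (fun N : ℕ => ENNReal.ofReal (K * (N : ℝ) ^ (1 - β1))) atTop (𝓝 0) := by
      rw [← ENNReal.ofReal_zero]
      refine ENNReal.tendsto_ofReal ?_
      have h1 : Tendsto (fun x : ℝ => x ^ (1 - β1)) atTop (𝓝 0) := by
        simpa [neg_sub] using tendsto_rpow_neg_atTop (y := β1 - 1) (by linarith)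
      simpa using (h1.comp tendsto_natCast_atTop_atTop).const_mul K
    have hX0 : eLpNorm X 2 P = 0 :=
      le_antisymm (ge_of_tendsto hlim hbound) zero_le
    exact (eLpNorm_eq_zero_iff hXmeas (by norm_num)).mp hX0
  -- Step D : martingale property
  have stepD : ∀ s t, 0 ≤ s → s < t → t ≤ T →
      P[fun ω => Z t ω - Z s ω|ℱ s] =ᵐ[P] 0 := by
    intro s t hs hst htT
    have hsT : s ≤ T := hst.le.trans htT
    set X := P[fun ω => Z t ω - Z s ω|ℱ s] with hX
    have hXmeas : AEStronglyMeasurable X P :=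
      (stronglyMeasurable_condExp.mono (ℱ.le s)).aestronglyMeasurable
    have hts : 0 < t - s := sub_pos.mpr hst
    have hbound : ∀ N : ℕ, eLpNorm X 1 P ≤
        ENNReal.ofReal (c2 * ((t - s) / ((N : ℝ) + 2)) ^ e1
          + c3 * ((t - s) / ((N : ℝ) + 2)) ^ e2) := by
      intro N
      set δ := (t - s) / ((N : ℝ) + 2) with hδ
      have hN2 : (0 : ℝ) < (N : ℝ) + 2 := by positivity
      have hδ0 : 0 < δ := div_pos hts hN2
      have hδlt : δ < t - s := by
        rw [hδ, div_lt_iff₀ hN2]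
        nlinarith [Nat.cast_nonneg (α := ℝ) N]
      set u := s + δ with hu
      have hsu : s < u := by rw [hu]; linarith
      have hut : u < t := by rw [hu]; linarith
      have huT : u ≤ T := hut.le.trans htT
      have h0u : 0 ≤ u := hs.trans hsu.le
      have hIu : Integrable (fun ω => Z u ω - Z s ω) P := (Zint u h0u huT).sub (Zint s hs hsT)
      have hIt : Integrable (fun ω => Z t ω - Z u ω) P := (Zint t (hs.trans hst.le) htT).sub (Zint u h0u huT)
      have hsplit : (fun ω => Z t ω - Z s ω)
          = (fun ω => Z u ω - Z s ω) + (fun ω => Z t ω - Z u ω) := by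
        funext ω; simp only [Pi.add_apply]; ring
      have hce : X =ᵐ[P] P[fun ω => Z u ω - Z s ω|ℱ s] := by
        calc X = P[(fun ω => Z u ω - Z s ω) + (fun ω => Z t ω - Z u ω)|ℱ s] := by
              rw [hX, hsplit]
          _ =ᵐ[P] P[fun ω => Z u ω - Z s ω|ℱ s] + P[fun ω => Z t ω - Z u ω|ℱ s] :=
              condExp_add (m := ℱ s) hIu hIt
          _ =ᵐ[P] P[fun ω => Z u ω - Z s ω|ℱ s] := by
              filter_upwards [stepC s u t hs hsu hut htT] with ω hω
              simp only [Pi.add_apply, hω, Pi.zero_apply, add_zero]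
      have hme : AEStronglyMeasurable (fun ω => Z u ω - Z s ω) P :=
        ((hZmem u h0u huT).aestronglyMeasurable).sub ((hZmem s hs hsT).aestronglyMeasurable)
      calc eLpNorm X 1 P = eLpNorm (P[fun ω => Z u ω - Z s ω|ℱ s]) 1 P := eLpNorm_congr_ae hce
        _ ≤ eLpNorm (fun ω => Z u ω - Z s ω) 1 P := eLpNorm_one_condExp_le_eLpNorm _
        _ ≤ eLpNorm (fun ω => Z u ω - Z s ω) 2 P :=
            eLpNorm_le_eLpNorm_of_exponent_le (by norm_num) hme
        _ ≤ ENNReal.ofReal (c2 * (u - s) ^ e1 + c3 * (u - s) ^ e2) := hZpath s u hs hsu huT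
        _ = ENNReal.ofReal (c2 * δ ^ e1 + c3 * δ ^ e2) := by
            rw [hu]; ring_nf
    have hδt : Tendsto (fun N : ℕ => (t - s) / ((N : ℝ) + 2)) atTop (𝓝 0) :=
      tendsto_const_nhds.div_atTop
        (tendsto_atTop_add_const_right atTop 2 tendsto_natCast_atTop_atTop)
    have hrp : ∀ e : ℝ, 1 / 2 < e →
        Tendsto (fun N : ℕ => ((t - s) / ((N : ℝ) + 2)) ^ e) atTop (𝓝 0) := by
      intro e he
      have hc := (Real.continuousAt_rpow_const 0 e (Or.inr (by linarith))).tendsto.comp hδt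
      simpa [Function.comp_def, Real.zero_rpow (by linarith : e ≠ 0)] using hc
    have hlim : Tendsto (fun N : ℕ => ENNReal.ofReal (c2 * ((t - s) / ((N : ℝ) + 2)) ^ e1
        + c3 * ((t - s) / ((N : ℝ) + 2)) ^ e2)) atTop (𝓝 0) := by
      rw [← ENNReal.ofReal_zero]
      refine ENNReal.tendsto_ofReal ?_
      simpa using ((hrp e1 he1).const_mul c2).add ((hrp e2 he2).const_mul c3)
    have hX0 : eLpNorm X 1 P = 0 :=
      le_antisymm (ge_of_tendsto hlim (Eventually.of_forall hbound)) zero_le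
    exact (eLpNorm_eq_zero_iff hXmeas one_ne_zero).mp hX0
  -- final step : orthogonality of increments
  intro t ht htT
  rcases eq_or_lt_of_le ht with h | hpos
  · filter_upwards with ω
    rw [← h]
    exact hZ0 ω
  set I := ∫ ω, (Z t ω) ^ 2 ∂P with hI
  have hInn : 0 ≤ I := integral_nonneg fun ω => sq_nonneg _
  have hmain : ∀ n : ℕ, 1 ≤ n →
      I ≤ (n : ℝ) * (c2 * (t / n) ^ e1 + c3 * (t / n) ^ e2) ^ 2 := by
    intro n hn
    have hn0 : (0 : ℝ) < n := by exact_mod_cast hn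
    set h := t / n with hh
    have hh0 : 0 < h := div_pos hpos hn0
    set p : ℕ → ℝ := fun k => k * h with hp
    have hp0 : p 0 = 0 := by simp [hp]
    have hpn : p n = t := by simp only [hp, hh]; field_simp
    have hpmono : ∀ k l : ℕ, k ≤ l → p k ≤ p l := by
      intro k l hkl
      simp only [hp]
      have hcast : (k : ℝ) ≤ l := Nat.cast_le.mpr hkl
      nlinarith
    have hstep : ∀ k : ℕ, p (k + 1) - p k = h := by
      intro k; simp only [hp, Nat.cast_add, Nat.cast_one]; ring
    have hpnn : ∀ k : ℕ, 0 ≤ p k := by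
      intro k; simp only [hp]; positivity
    have hpleT : ∀ k : ℕ, k ≤ n → p k ≤ T := fun k hk => (hpn ▸ hpmono k n hk).trans htT
    set ξ : ℕ → Ω → ℝ := fun k ω => Z (p (k + 1)) ω - Z (p k) ω with hξ
    have hξmem : ∀ k : ℕ, k < n → MemLp (ξ k) 2 P := fun k hk =>
      (hZmem _ (hpnn _) (hpleT _ hk)).sub (hZmem _ (hpnn _) (hpleT _ hk.le))
    have hξint2 : ∀ j k : ℕ, j < n → k < n → Integrable (fun ω => ξ j ω * ξ k ω) P :=
      fun j k hj hk => integrable_mul_of_memL2 (hξmem j hj) (hξmem k hk)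
    have htel : ∀ ω, Z t ω = ∑ k ∈ Finset.range n, ξ k ω := by
      intro ω
      rw [hξ]
      simp only []
      rw [Finset.sum_range_sub (f := fun k => Z (p k) ω), hp0, hpn, hZ0, sub_zero]
    have hIexp : I = ∑ j ∈ Finset.range n, ∑ k ∈ Finset.range n, ∫ ω, ξ j ω * ξ k ω ∂P := by
      rw [hI]
      have hpt : ∀ ω, (Z t ω) ^ 2
          = ∑ j ∈ Finset.range n, ∑ k ∈ Finset.range n, ξ j ω * ξ k ω := by
        intro ω
        rw [htel ω, sq, Finset.sum_mul_sum]
      simp_rw [hpt]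
      rw [integral_finset_sum _ (fun j hj => integrable_finset_sum _
        (fun k hk => hξint2 j k (Finset.mem_range.mp hj) (Finset.mem_range.mp hk)))]
      exact Finset.sum_congr rfl fun j hj => integral_finset_sum _
        (fun k hk => hξint2 j k (Finset.mem_range.mp hj) (Finset.mem_range.mp hk))
    have hkey : ∀ j k : ℕ, j < k → k < n → ∫ ω, ξ j ω * ξ k ω ∂P = 0 := by
      intro j k hjk hkn
      have hm : (ℱ (p k) : MeasurableSpace Ω) ≤ m0 := ℱ.le _
      have hjmeas : StronglyMeasurable[ℱ (p k)] (ξ j) := by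
        refine StronglyMeasurable.sub ?_ ?_
        · exact (hZmeas (p (j + 1)) (hpnn _) (hpleT _ (by omega))).mono
            (ℱ.mono (hpmono _ _ (by omega)))
        · exact (hZmeas (p j) (hpnn _) (hpleT _ (by omega))).mono
            (ℱ.mono (hpmono _ _ (by omega)))
      have hcond0 : P[ξ k|ℱ (p k)] =ᵐ[P] 0 := by
        have := stepD (p k) (p (k + 1)) (hpnn k) (by have := hstep k; linarith) (hpleT _ hkn)
        exact this
      have hint_k : Integrable (ξ k) P := (hξmem k hkn).integrable one_le_two
      have hint_prod : Integrable (ξ j * ξ k) P := hξint2 j k (by omega) hkn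
      have h1 : ∫ ω, (P[ξ j * ξ k|ℱ (p k)]) ω ∂P = ∫ ω, (ξ j * ξ k) ω ∂P :=
        integral_condExp (f := ξ j * ξ k) hm
      have h1' : ∫ ω, ξ j ω * ξ k ω ∂P = ∫ ω, (P[ξ j * ξ k|ℱ (p k)]) ω ∂P := by
        rw [h1]; rfl
      rw [h1']
      have h2 : P[ξ j * ξ k|ℱ (p k)] =ᵐ[P] 0 := by
        refine (condExp_mul_of_stronglyMeasurable_left hjmeas hint_prod hint_k).trans ?_
        filter_upwards [hcond0] with ω hω
        simp [hω]
      rw [integral_congr_ae h2]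
      simp
    have hcross : ∀ j ∈ Finset.range n, ∀ k ∈ Finset.range n, k ≠ j →
        ∫ ω, ξ j ω * ξ k ω ∂P = 0 := by
      intro j hj k hk hne
      rcases lt_or_gt_of_ne hne with hlt | hgt
      · have := hkey k j hlt (Finset.mem_range.mp hj)
        rw [← this]
        simp_rw [mul_comm]
      · exact hkey j k hgt (Finset.mem_range.mp hk)
    have hdiag : ∀ k : ℕ, k < n →
        ∫ ω, ξ k ω * ξ k ω ∂P ≤ (c2 * h ^ e1 + c3 * h ^ e2) ^ 2 := by
      intro k hk
      have hb : 0 ≤ c2 * h ^ e1 + c3 * h ^ e2 := by positivity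
      have hbd : eLpNorm (ξ k) 2 P ≤ ENNReal.ofReal (c2 * h ^ e1 + c3 * h ^ e2) := by
        have := hZpath (p k) (p (k + 1)) (hpnn k) (by have := hstep k; linarith) (hpleT _ hk)
        rwa [hstep k] at this
      have := integral_sq_le_of_eLpNorm_le (hξmem k hk) hb hbd
      calc ∫ ω, ξ k ω * ξ k ω ∂P = ∫ ω, (ξ k ω) ^ 2 ∂P := by simp_rw [sq]
        _ ≤ _ := this
    calc I = ∑ j ∈ Finset.range n, ∑ k ∈ Finset.range n, ∫ ω, ξ j ω * ξ k ω ∂P := hIexp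
      _ = ∑ j ∈ Finset.range n, ∫ ω, ξ j ω * ξ j ω ∂P := by
          refine Finset.sum_congr rfl fun j hj => ?_
          exact Finset.sum_eq_single j (fun k hk hne => hcross j hj k hk hne)
            (fun hnotin => (hnotin hj).elim)
      _ ≤ ∑ _j ∈ Finset.range n, (c2 * h ^ e1 + c3 * h ^ e2) ^ 2 :=
          Finset.sum_le_sum fun j hj => hdiag j (Finset.mem_range.mp hj)
      _ = (n : ℝ) * (c2 * h ^ e1 + c3 * h ^ e2) ^ 2 := by
          rw [Finset.sum_const, Finset.card_range, nsmul_eq_mul]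
  -- pass to the limit
  have TD : ∀ c : ℝ, 1 < c → Tendsto (fun n : ℕ => (n : ℝ) * (t / n) ^ c) atTop (𝓝 0) := by
    intro c hc
    have heq : ∀ᶠ n : ℕ in atTop, t ^ c * ((n : ℝ)) ^ (1 - c) = (n : ℝ) * (t / n) ^ c := by
      filter_upwards [eventually_ge_atTop 1] with n hn
      have hn0 : (0 : ℝ) < n := by exact_mod_cast hn
      rw [Real.div_rpow hpos.le hn0.le, Real.rpow_sub hn0, Real.rpow_one]
      ring
    have hlim0 : Tendsto (fun n : ℕ => t ^ c * ((n : ℝ)) ^ (1 - c)) atTop (𝓝 0) := by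
      have h1 : Tendsto (fun x : ℝ => x ^ (1 - c)) atTop (𝓝 0) := by
        simpa [neg_sub] using tendsto_rpow_neg_atTop (y := c - 1) (by linarith)
      simpa using (h1.comp tendsto_natCast_atTop_atTop).const_mul (t ^ c)
    exact Tendsto.congr' heq hlim0
  set B : ℕ → ℝ := fun n => c2 ^ 2 * ((n : ℝ) * (t / n) ^ (e1 + e1))
      + 2 * c2 * c3 * ((n : ℝ) * (t / n) ^ (e1 + e2))
      + c3 ^ 2 * ((n : ℝ) * (t / n) ^ (e2 + e2)) with hB
  have hBlim : Tendsto B atTop (𝓝 0) := by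
    have := (((TD (e1 + e1) (by linarith)).const_mul (c2 ^ 2)).add
      ((TD (e1 + e2) (by linarith)).const_mul (2 * c2 * c3))).add
      ((TD (e2 + e2) (by linarith)).const_mul (c3 ^ 2))
    simpa [hB] using this
  have hIB : ∀ᶠ n : ℕ in atTop, I ≤ B n := by
    filter_upwards [eventually_ge_atTop 1] with n hn
    have hn0 : (0 : ℝ) < n := by exact_mod_cast hn
    have hh0 : 0 < t / n := div_pos hpos hn0
    have heq : (n : ℝ) * (c2 * (t / n) ^ e1 + c3 * (t / n) ^ e2) ^ 2 = B n := by
      rw [hB]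
      simp only []
      rw [Real.rpow_add hh0, Real.rpow_add hh0, Real.rpow_add hh0]
      ring
    rw [← heq]
    exact hmain n hn
  have hI0 : I = 0 := le_antisymm (ge_of_tendsto hBlim hIB) hInn
  have hint : Integrable (fun ω => (Z t ω) ^ 2) P := by
    have := integrable_mul_of_memL2 (hZmem t ht htT) (hZmem t ht htT)
    simpa [sq] using this
  have hae := (integral_eq_zero_iff_of_nonneg (fun ω => sq_nonneg (Z t ω)) hint).mp hI0
  filter_upwards [hae] with ω hω
  have hsq : (Z t ω) ^ 2 = 0 := hω
  simpa using pow_eq_zero_iff (two_ne_zero) |>.mp hsq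

end Helpers

set_option maxHeartbeats 1000000 in
/-- **Uniqueness in the generalized stochastic sewing lemma** (Theorem 1.1, uniqueness part).
Under the standing hypotheses (H), any two adapted `L^m` processes vanishing at `0` that
satisfy the two sewing estimates (with possibly different constants) coincide almost surely
at every time `t ∈ [0, T]`. -/
theorem generalized_stochastic_sewing_uniqueness
    {Ω : Type*} {m0 : MeasurableSpace Ω} (P : Measure Ω) [IsProbabilityMeasure P]
    (ℱ : Filtration ℝ m0) (T : ℝ) (hT : 0 < T) (d : ℕ)
    (m Γ1 Γ2 M α β1 β2 : ℝ)
    (hm : 2 ≤ m) (hΓ1 : 0 ≤ Γ1) (hΓ2 : 0 ≤ Γ2) (hM : 0 ≤ M) (hα : 0 ≤ α)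
    (hβ1 : 1 < β1) (hβ2 : 1 / 2 < β2) (hβ1α : 1 / 2 < β1 - α)
    (A : ℝ → ℝ → Ω → EuclideanSpace ℝ (Fin d))
    (hA0 : ∀ s, A s s = 0)
    (hAmeas : ∀ s t : ℝ, 0 ≤ s → s ≤ t → t ≤ T → StronglyMeasurable[ℱ t] (A s t))
    (hAmem : ∀ s t : ℝ, 0 ≤ s → s ≤ t → t ≤ T → MemLp (A s t) (ENNReal.ofReal m) P)
    (hH1 : ∀ t0 t1 t2 t3 : ℝ, 0 ≤ t0 → t0 < t1 → t1 < t2 → t2 < t3 → t3 ≤ T →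
      M * (t3 - t1) ≤ t1 - t0 →
      eLpNorm (P[fun ω => A t1 t3 ω - A t1 t2 ω - A t2 t3 ω | ℱ t0]) (ENNReal.ofReal m) P
        ≤ ENNReal.ofReal (Γ1 * (t1 - t0) ^ (-α) * (t3 - t1) ^ β1))
    (hH2 : ∀ t0 t1 t2 : ℝ, 0 ≤ t0 → t0 < t1 → t1 < t2 → t2 ≤ T →
      eLpNorm (fun ω => A t0 t2 ω - A t0 t1 ω - A t1 t2 ω) (ENNReal.ofReal m) P
        ≤ ENNReal.ofReal (Γ2 * (t2 - t0) ^ β2))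
    -- the two candidate sewing processes
    (𝒜 𝒜' : ℝ → Ω → EuclideanSpace ℝ (Fin d))
    (h0 : 𝒜 0 = 0) (h0' : 𝒜' 0 = 0)
    (hmeas : ∀ t : ℝ, 0 ≤ t → t ≤ T →
      StronglyMeasurable[ℱ t] (𝒜 t) ∧ MemLp (𝒜 t) (ENNReal.ofReal m) P)
    (hmeas' : ∀ t : ℝ, 0 ≤ t → t ≤ T →
      StronglyMeasurable[ℱ t] (𝒜' t) ∧ MemLp (𝒜' t) (ENNReal.ofReal m) P)
    (C1 C2 C3 C1' C2' C3' : ℝ)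
    (hC1 : 0 ≤ C1) (hC2 : 0 ≤ C2) (hC3 : 0 ≤ C3)
    (hC1' : 0 ≤ C1') (hC2' : 0 ≤ C2') (hC3' : 0 ≤ C3')
    (hi : ∀ t0 t1 t2 : ℝ, 0 ≤ t0 → t0 < t1 → t1 < t2 → t2 ≤ T → M * (t2 - t1) ≤ t1 - t0 →
      eLpNorm (P[fun ω => 𝒜 t2 ω - 𝒜 t1 ω - A t1 t2 ω | ℱ t0]) (ENNReal.ofReal m) P
        ≤ ENNReal.ofReal (C1 * (t1 - t0) ^ (-α) * (t2 - t1) ^ β1))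
    (hii : ∀ t1 t2 : ℝ, 0 ≤ t1 → t1 < t2 → t2 ≤ T →
      eLpNorm (fun ω => 𝒜 t2 ω - 𝒜 t1 ω - A t1 t2 ω) (ENNReal.ofReal m) P
        ≤ ENNReal.ofReal (C2 * (t2 - t1) ^ (β1 - α) + C3 * (t2 - t1) ^ β2))
    (hi' : ∀ t0 t1 t2 : ℝ, 0 ≤ t0 → t0 < t1 → t1 < t2 → t2 ≤ T → M * (t2 - t1) ≤ t1 - t0 →
      eLpNorm (P[fun ω => 𝒜' t2 ω - 𝒜' t1 ω - A t1 t2 ω | ℱ t0]) (ENNReal.ofReal m) P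
        ≤ ENNReal.ofReal (C1' * (t1 - t0) ^ (-α) * (t2 - t1) ^ β1))
    (hii' : ∀ t1 t2 : ℝ, 0 ≤ t1 → t1 < t2 → t2 ≤ T →
      eLpNorm (fun ω => 𝒜' t2 ω - 𝒜' t1 ω - A t1 t2 ω) (ENNReal.ofReal m) P
        ≤ ENNReal.ofReal (C2' * (t2 - t1) ^ (β1 - α) + C3' * (t2 - t1) ^ β2)) :
    ∀ t : ℝ, 0 ≤ t → t ≤ T → 𝒜 t =ᵐ[P] 𝒜' t := by
  have hm2 : (2 : ℝ≥0∞) ≤ ENNReal.ofReal m := by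
    calc (2 : ℝ≥0∞) = ENNReal.ofReal 2 := by simp
      _ ≤ ENNReal.ofReal m := ENNReal.ofReal_le_ofReal hm
  -- coordinate processes
  have hkey : ∀ (i : Fin d) (t : ℝ), 0 ≤ t → t ≤ T →
      (fun ω => (EuclideanSpace.proj (𝕜 := ℝ) i) (𝒜 t ω)
        - (EuclideanSpace.proj (𝕜 := ℝ) i) (𝒜' t ω)) =ᵐ[P] 0 := by
    intro i
    set L : EuclideanSpace ℝ (Fin d) →L[ℝ] ℝ := EuclideanSpace.proj i with hL
    set Z : ℝ → Ω → ℝ := fun r ω => L (𝒜 r ω) - L (𝒜' r ω) with hZ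
    have hnrm : ∀ x : EuclideanSpace ℝ (Fin d), ‖L x‖ ≤ ‖x‖ := by
      intro x
      rw [hL, Real.norm_eq_abs]
      exact euclid_coord_abs_le x i
    have hGmem : ∀ u v : ℝ, 0 ≤ u → u ≤ v → v ≤ T →
        MemLp (fun ω => 𝒜 v ω - 𝒜 u ω - A u v ω) (ENNReal.ofReal m) P := by
      intro u v h1 h2 h3
      exact ((hmeas v (h1.trans h2) h3).2.sub (hmeas u h1 (h2.trans h3)).2).sub
        (hAmem u v h1 h2 h3)
    have hG'mem : ∀ u v : ℝ, 0 ≤ u → u ≤ v → v ≤ T →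
        MemLp (fun ω => 𝒜' v ω - 𝒜' u ω - A u v ω) (ENNReal.ofReal m) P := by
      intro u v h1 h2 h3
      exact ((hmeas' v (h1.trans h2) h3).2.sub (hmeas' u h1 (h2.trans h3)).2).sub
        (hAmem u v h1 h2 h3)
    have hZ0 : ∀ ω, Z 0 ω = 0 := by
      intro ω
      rw [hZ]
      simp only [h0, h0', Pi.zero_apply, map_zero, sub_zero]
    have hZmeas : ∀ r, 0 ≤ r → r ≤ T → StronglyMeasurable[ℱ r] (Z r) := by
      intro r h1 h2
      exact (L.continuous.comp_stronglyMeasurable (hmeas r h1 h2).1).sub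
        (L.continuous.comp_stronglyMeasurable (hmeas' r h1 h2).1)
    have hZmem : ∀ r, 0 ≤ r → r ≤ T → MemLp (Z r) 2 P := by
      intro r h1 h2
      have ha : MemLp (fun ω => L (𝒜 r ω)) 2 P :=
        L.comp_memLp' ((hmeas r h1 h2).2.mono_exponent hm2)
      have hb : MemLp (fun ω => L (𝒜' r ω)) 2 P :=
        L.comp_memLp' ((hmeas' r h1 h2).2.mono_exponent hm2)
      exact ha.sub hb
    have hZcond : ∀ s u v, 0 ≤ s → s < u → u < v → v ≤ T → M * (v - u) ≤ u - s →
        eLpNorm (P[fun ω => Z v ω - Z u ω|ℱ s]) 2 P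
          ≤ ENNReal.ofReal ((C1 + C1') * (u - s) ^ (-α) * (v - u) ^ β1) := by
      intro s u v hs hsu huv hvT hMc
      have h0u : 0 ≤ u := hs.trans hsu.le
      set G : Ω → EuclideanSpace ℝ (Fin d) := fun ω => 𝒜 v ω - 𝒜 u ω - A u v ω with hG
      set G' : Ω → EuclideanSpace ℝ (Fin d) := fun ω => 𝒜' v ω - 𝒜' u ω - A u v ω with hG'
      have hGm : MemLp G (ENNReal.ofReal m) P := hGmem u v h0u huv.le hvT
      have hG'm : MemLp G' (ENNReal.ofReal m) P := hG'mem u v h0u huv.le hvT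
      have hGint : Integrable G P := (hGm.mono_exponent hm2).integrable one_le_two
      have hG'int : Integrable G' P := (hG'm.mono_exponent hm2).integrable one_le_two
      have hfun : (fun ω => Z v ω - Z u ω)
          = (fun ω => L (G ω)) - (fun ω => L (G' ω)) := by
        funext ω
        simp only [hZ, hG, hG', Pi.sub_apply, map_sub]
        ring
      have hce : P[fun ω => Z v ω - Z u ω|ℱ s]
          =ᵐ[P] (fun ω => L ((P[G|ℱ s]) ω)) - (fun ω => L ((P[G'|ℱ s]) ω)) := by
        rw [hfun]
        refine (condExp_sub (m := ℱ s) (L.integrable_comp hGint) (L.integrable_comp hG'int)).trans ?_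
        exact EventuallyEq.sub (condexp_clm_comm (ℱ.le s) L hGint)
          (condexp_clm_comm (ℱ.le s) L hG'int)
      have hmes1 : AEStronglyMeasurable (fun ω => L ((P[G|ℱ s]) ω)) P :=
        (L.continuous.comp_stronglyMeasurable
          (stronglyMeasurable_condExp.mono (ℱ.le s))).aestronglyMeasurable
      have hmes2 : AEStronglyMeasurable (fun ω => L ((P[G'|ℱ s]) ω)) P :=
        (L.continuous.comp_stronglyMeasurable
          (stronglyMeasurable_condExp.mono (ℱ.le s))).aestronglyMeasurable
      have hb1 : eLpNorm (fun ω => L ((P[G|ℱ s]) ω)) 2 P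
          ≤ ENNReal.ofReal (C1 * (u - s) ^ (-α) * (v - u) ^ β1) := by
        calc eLpNorm (fun ω => L ((P[G|ℱ s]) ω)) 2 P
            ≤ eLpNorm (P[G|ℱ s]) 2 P := eLpNorm_mono fun ω => hnrm _
          _ ≤ eLpNorm (P[G|ℱ s]) (ENNReal.ofReal m) P :=
              eLpNorm_le_eLpNorm_of_exponent_le hm2
                (stronglyMeasurable_condExp.mono (ℱ.le s)).aestronglyMeasurable
          _ ≤ _ := hi s u v hs hsu huv hvT hMc
      have hb2 : eLpNorm (fun ω => L ((P[G'|ℱ s]) ω)) 2 P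
          ≤ ENNReal.ofReal (C1' * (u - s) ^ (-α) * (v - u) ^ β1) := by
        calc eLpNorm (fun ω => L ((P[G'|ℱ s]) ω)) 2 P
            ≤ eLpNorm (P[G'|ℱ s]) 2 P := eLpNorm_mono fun ω => hnrm _
          _ ≤ eLpNorm (P[G'|ℱ s]) (ENNReal.ofReal m) P :=
              eLpNorm_le_eLpNorm_of_exponent_le hm2
                (stronglyMeasurable_condExp.mono (ℱ.le s)).aestronglyMeasurable
          _ ≤ _ := hi' s u v hs hsu huv hvT hMc
      have hxnn : 0 ≤ (u - s) ^ (-α) * (v - u) ^ β1 :=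
        mul_nonneg (Real.rpow_nonneg (by linarith) _) (Real.rpow_nonneg (by linarith) _)
      calc eLpNorm (P[fun ω => Z v ω - Z u ω|ℱ s]) 2 P
          = eLpNorm ((fun ω => L ((P[G|ℱ s]) ω)) - fun ω => L ((P[G'|ℱ s]) ω)) 2 P :=
            eLpNorm_congr_ae hce
        _ ≤ eLpNorm (fun ω => L ((P[G|ℱ s]) ω)) 2 P
            + eLpNorm (fun ω => L ((P[G'|ℱ s]) ω)) 2 P :=
            eLpNorm_sub_le hmes1 hmes2 one_le_two
        _ ≤ ENNReal.ofReal (C1 * (u - s) ^ (-α) * (v - u) ^ β1)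
            + ENNReal.ofReal (C1' * (u - s) ^ (-α) * (v - u) ^ β1) := add_le_add hb1 hb2
        _ = ENNReal.ofReal ((C1 + C1') * (u - s) ^ (-α) * (v - u) ^ β1) := by
            rw [← ENNReal.ofReal_add
              (mul_nonneg (mul_nonneg hC1 (Real.rpow_nonneg (by linarith) _))
                (Real.rpow_nonneg (by linarith) _))
              (mul_nonneg (mul_nonneg hC1' (Real.rpow_nonneg (by linarith) _))
                (Real.rpow_nonneg (by linarith) _))]
            congr 1
            ring
    have hZpath : ∀ u v, 0 ≤ u → u < v → v ≤ T →
        eLpNorm (fun ω => Z v ω - Z u ω) 2 P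
          ≤ ENNReal.ofReal ((C2 + C2') * (v - u) ^ (β1 - α) + (C3 + C3') * (v - u) ^ β2) := by
      intro u v h0u huv hvT
      set G : Ω → EuclideanSpace ℝ (Fin d) := fun ω => 𝒜 v ω - 𝒜 u ω - A u v ω with hG
      set G' : Ω → EuclideanSpace ℝ (Fin d) := fun ω => 𝒜' v ω - 𝒜' u ω - A u v ω with hG'
      have hGm : MemLp G (ENNReal.ofReal m) P := hGmem u v h0u huv.le hvT
      have hG'm : MemLp G' (ENNReal.ofReal m) P := hG'mem u v h0u huv.le hvT
      have hfun : (fun ω => Z v ω - Z u ω)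
          = (fun ω => L (G ω)) - (fun ω => L (G' ω)) := by
        funext ω
        simp only [hZ, hG, hG', Pi.sub_apply, map_sub]
        ring
      have hb1 : eLpNorm (fun ω => L (G ω)) 2 P
          ≤ ENNReal.ofReal (C2 * (v - u) ^ (β1 - α) + C3 * (v - u) ^ β2) := by
        calc eLpNorm (fun ω => L (G ω)) 2 P ≤ eLpNorm G 2 P := eLpNorm_mono fun ω => hnrm _
          _ ≤ eLpNorm G (ENNReal.ofReal m) P :=
              eLpNorm_le_eLpNorm_of_exponent_le hm2 hGm.aestronglyMeasurable
          _ ≤ _ := hii u v h0u huv hvT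
      have hb2 : eLpNorm (fun ω => L (G' ω)) 2 P
          ≤ ENNReal.ofReal (C2' * (v - u) ^ (β1 - α) + C3' * (v - u) ^ β2) := by
        calc eLpNorm (fun ω => L (G' ω)) 2 P ≤ eLpNorm G' 2 P := eLpNorm_mono fun ω => hnrm _
          _ ≤ eLpNorm G' (ENNReal.ofReal m) P :=
              eLpNorm_le_eLpNorm_of_exponent_le hm2 hG'm.aestronglyMeasurable
          _ ≤ _ := hii' u v h0u huv hvT
      have hvu : (0:ℝ) ≤ v - u := by linarith
      calc eLpNorm (fun ω => Z v ω - Z u ω) 2 P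
          = eLpNorm ((fun ω => L (G ω)) - fun ω => L (G' ω)) 2 P := by rw [hfun]
        _ ≤ eLpNorm (fun ω => L (G ω)) 2 P + eLpNorm (fun ω => L (G' ω)) 2 P :=
            eLpNorm_sub_le
              (L.continuous.comp_aestronglyMeasurable hGm.aestronglyMeasurable)
              (L.continuous.comp_aestronglyMeasurable hG'm.aestronglyMeasurable)
              one_le_two
        _ ≤ ENNReal.ofReal (C2 * (v - u) ^ (β1 - α) + C3 * (v - u) ^ β2)
            + ENNReal.ofReal (C2' * (v - u) ^ (β1 - α) + C3' * (v - u) ^ β2) :=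
            add_le_add hb1 hb2
        _ = ENNReal.ofReal ((C2 + C2') * (v - u) ^ (β1 - α) + (C3 + C3') * (v - u) ^ β2) := by
            rw [← ENNReal.ofReal_add
              (add_nonneg (mul_nonneg hC2 (Real.rpow_nonneg hvu _))
                (mul_nonneg hC3 (Real.rpow_nonneg hvu _)))
              (add_nonneg (mul_nonneg hC2' (Real.rpow_nonneg hvu _))
                (mul_nonneg hC3' (Real.rpow_nonneg hvu _)))]
            congr 1
            ring
    exact sewing_core P ℱ T M α β1 (C1 + C1') (C2 + C2') (C3 + C3') (β1 - α) β2
      hα hβ1 (by linarith) (by linarith) (by linarith) hβ1α hβ2 Z hZ0 hZmeas hZmem hZcond hZpath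
  intro t ht htT
  have hall : ∀ᵐ ω ∂P, ∀ i : Fin d,
      (EuclideanSpace.proj (𝕜 := ℝ) i) (𝒜 t ω) - (EuclideanSpace.proj (𝕜 := ℝ) i) (𝒜' t ω) = 0 := by
    rw [ae_all_iff]
    intro i
    filter_upwards [hkey i t ht htT] with ω hω
    exact hω
  filter_upwards [hall] with ω hω
  ext i
  have := hω i
  rw [sub_eq_zero] at this
  simpa using this
end

section
/- Existence of quasi-uniform coarsenings of partitions (Lemma 2.5). Let T > 0 and let π be a partition of [0,T]. Then there exists a partition π' of [0,T] such that π refines π', the mesh satisfies |π'| ≤ 3|π|, and min_{[s,t] ∈ π'} (t − s) ≥ |π'|/3. -/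
/-- The mesh of a partition `t 0 < t 1 < ⋯ < t N`, i.e. the maximum of the
increments `t (i+1) - t i` for `i < N`. -/
noncomputable def partitionMesh (N : ℕ) (t : ℕ → ℝ) (hN : 0 < N) : ℝ :=
  (Finset.range N).sup' (Finset.nonempty_range_iff.mpr hN.ne') fun i => t (i + 1) - t i

open Classical in
/-- Greedy next index: jump to `N` if less than `3δ` remains, otherwise to the first
index at distance at least `δ`. -/
noncomputable def quNext (T : ℝ) (N : ℕ) (t : ℕ → ℝ) (δ : ℝ) (i : ℕ) : ℕ :=
  if T - t i < 3*δ then N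
  else Nat.find (⟨N, Or.inr le_rfl⟩ : ∃ m, δ ≤ t m - t i ∨ N ≤ m)

noncomputable def quIdx (T : ℝ) (N : ℕ) (t : ℕ → ℝ) (δ : ℝ) : ℕ → ℕ
  | 0 => 0
  | k+1 => quNext T N t δ (quIdx T N t δ k)

theorem quNext_spec (T : ℝ) (N : ℕ) (t : ℕ → ℝ) (δ : ℝ)
    (hδpos : 0 < δ)
    (hδle : ∀ i < N, t (i + 1) - t i ≤ δ)
    (tmono : ∀ j ≤ N, ∀ i ≤ j, t i ≤ t j)
    (htN : t N = T)
    (i : ℕ) (hiN : i < N) (hinv : δ ≤ T - t i) :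
    i < quNext T N t δ i ∧ quNext T N t δ i ≤ N ∧
    δ ≤ t (quNext T N t δ i) - t i ∧ t (quNext T N t δ i) - t i ≤ 3*δ ∧
    (quNext T N t δ i < N → δ ≤ T - t (quNext T N t δ i)) := by
  classical
  by_cases hb : T - t i < 3*δ
  · rw [quNext, if_pos hb]
    refine ⟨hiN, le_rfl, ?_, ?_, fun h => absurd h (lt_irrefl N)⟩
    · rw [htN]; exact hinv
    · rw [htN]; linarith
  · rw [quNext, if_neg hb]
    push_neg at hb
    have hex : ∃ m, δ ≤ t m - t i ∨ N ≤ m := ⟨N, Or.inr le_rfl⟩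
    set m := Nat.find hex with hm
    have hmN : m ≤ N := Nat.find_le (Or.inr le_rfl)
    have hspec : δ ≤ t m - t i ∨ N ≤ m := Nat.find_spec hex
    have hlow : δ ≤ t m - t i := by
      rcases hspec with h | h
      · exact h
      · have : m = N := le_antisymm hmN h
        rw [this, htN]
        linarith
    have him : i < m := by
      rw [hm]
      rw [Nat.lt_find_iff]
      intro k hk
      rintro (h | h)
      · have : t k ≤ t i := tmono i hiN.le k hk
        linarith
      · omega
    have hm1 : ¬ (δ ≤ t (m - 1) - t i ∨ N ≤ m - 1) := Nat.find_min hex (by omega)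
    push_neg at hm1
    obtain ⟨h1, h2⟩ := hm1
    have hstep : t m - t (m - 1) ≤ δ := by
      have := hδle (m - 1) h2
      have hms : m - 1 + 1 = m := by omega
      rwa [hms] at this
    have hup : t m - t i ≤ 2*δ := by linarith
    refine ⟨him, hmN, hlow, by linarith, fun hmlt => ?_⟩
    linarith

/-- **Existence of quasi-uniform coarsenings of partitions** (Lemma 2.5). For every
partition `π` of `[0, T]` there is a partition `π'` of `[0, T]` such that `π` refines `π'`,
`|π'| ≤ 3 |π|`, and every increment of `π'` is at least `|π'| / 3`. -/
theorem exists_quasi_uniform_coarsening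
    (T : ℝ) (hT : 0 < T) (N : ℕ) (t : ℕ → ℝ) (hN : 0 < N)
    (ht0 : t 0 = 0) (htN : t N = T) (hmono : ∀ i < N, t i < t (i + 1)) :
    ∃ (N' : ℕ) (t' : ℕ → ℝ) (hN' : 0 < N'),
      t' 0 = 0 ∧ t' N' = T ∧ (∀ j < N', t' j < t' (j + 1)) ∧
      -- `π` refines `π'`: every point of `π'` is a point of `π`
      (∀ j ≤ N', ∃ i ≤ N, t i = t' j) ∧
      partitionMesh N' t' hN' ≤ 3 * partitionMesh N t hN ∧
      (∀ j < N', partitionMesh N' t' hN' / 3 ≤ t' (j + 1) - t' j) := by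
  classical
  set δ := partitionMesh N t hN with hδdef
  have hδle : ∀ i < N, t (i + 1) - t i ≤ δ := by
    intro i hi
    rw [hδdef, partitionMesh]
    exact Finset.le_sup' (fun i => t (i + 1) - t i) (Finset.mem_range.mpr hi)
  have hδpos : 0 < δ :=
    lt_of_lt_of_le (sub_pos.mpr (hmono 0 hN)) (by simpa [ht0] using hδle 0 hN)
  have tmono : ∀ j ≤ N, ∀ i ≤ j, t i ≤ t j := by
    intro j
    induction j with
    | zero => intro _ i hi; simp [Nat.le_zero.mp hi]
    | succ j ih =>
      intro hjN i hi
      rcases eq_or_lt_of_le hi with h | h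
      · rw [h]
      · have h1 : t i ≤ t j := ih (Nat.le_of_succ_le hjN) i (Nat.lt_succ_iff.mp h)
        have h2 : t j < t (j + 1) := hmono j (Nat.lt_of_succ_le hjN)
        linarith
  have tstrict : ∀ i j, i < j → j ≤ N → t i < t j := by
    intro i j hij hjN
    obtain ⟨k, rfl⟩ : ∃ k, j = k + 1 := ⟨j - 1, by omega⟩
    have h1 : t i ≤ t k := tmono k (by omega) i (by omega)
    have h2 : t k < t (k + 1) := hmono k (by omega)
    linarith
  have hδT : δ ≤ T := by
    rw [hδdef, partitionMesh]
    apply Finset.sup'_le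
    intro i hi
    rw [Finset.mem_range] at hi
    have h1 : t (i + 1) ≤ t N := tmono N le_rfl (i + 1) hi
    have h2 : t 0 ≤ t i := tmono i (by omega) 0 (by omega)
    rw [htN] at h1; rw [ht0] at h2
    linarith
  set idx := quIdx T N t δ with hidxdef
  have hidx0 : idx 0 = 0 := rfl
  have hidxS : ∀ k, idx (k + 1) = quNext T N t δ (idx k) := fun _ => rfl
  have hnextN : quNext T N t δ N = N := by
    rw [quNext, if_pos]
    rw [htN]
    linarith
  have hinv : ∀ k, idx k ≤ N ∧ (idx k < N → δ ≤ T - t (idx k)) := by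
    intro k
    induction k with
    | zero =>
      refine ⟨Nat.zero_le N, fun _ => ?_⟩
      rw [hidx0, ht0]
      linarith
    | succ k ih =>
      obtain ⟨h1, h2⟩ := ih
      rcases eq_or_lt_of_le h1 with h | h
      · rw [hidxS, h, hnextN]
        exact ⟨le_rfl, fun hc => absurd hc (lt_irrefl N)⟩
      · obtain ⟨ha, hb, hc, hd, he⟩ := quNext_spec T N t δ hδpos hδle tmono htN (idx k) h (h2 h)
        rw [hidxS]
        exact ⟨hb, he⟩
  have hincr : ∀ k, idx k < N → idx k < idx (k + 1) ∧
      δ ≤ t (idx (k + 1)) - t (idx k) ∧ t (idx (k + 1)) - t (idx k) ≤ 3*δ := by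
    intro k hk
    obtain ⟨ha, hb, hc, hd, he⟩ := quNext_spec T N t δ hδpos hδle tmono htN (idx k) hk
      ((hinv k).2 hk)
    rw [hidxS]
    exact ⟨ha, hc, hd⟩
  have hgrow : ∀ k, k ≤ idx k ∨ idx k = N := by
    intro k
    induction k with
    | zero => exact Or.inl (Nat.zero_le _)
    | succ k ih =>
      rcases ih with h | h
      · rcases eq_or_lt_of_le (hinv k).1 with he | he
        · right; rw [hidxS, he, hnextN]
        · left
          have := (hincr k he).1
          omega
      · right; rw [hidxS, h, hnextN]
  have hreach : ∃ k, idx k = N := by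
    refine ⟨N, ?_⟩
    rcases hgrow N with h | h
    · exact le_antisymm (hinv N).1 h
    · exact h
  set N' := Nat.find hreach with hN'def
  have hN'spec : idx N' = N := Nat.find_spec hreach
  have hltN : ∀ j < N', idx j < N := fun j hj =>
    lt_of_le_of_ne (hinv j).1 (Nat.find_min hreach hj)
  have hN'pos : 0 < N' := by
    rcases Nat.eq_zero_or_pos N' with h | h
    · exfalso
      rw [h, hidx0] at hN'spec
      omega
    · exact h
  refine ⟨N', fun j => t (idx j), hN'pos, ?_, ?_, ?_, ?_, ?_, ?_⟩
  · show t (idx 0) = 0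
    rw [hidx0, ht0]
  · show t (idx N') = T
    rw [hN'spec, htN]
  · intro j hj
    have h1 := (hincr j (hltN j hj)).1
    have h2 : idx (j + 1) ≤ N := (hinv (j + 1)).1
    exact tstrict _ _ h1 h2
  · intro j _
    exact ⟨idx j, (hinv j).1, rfl⟩
  · rw [partitionMesh]
    apply Finset.sup'_le
    intro j hj
    rw [Finset.mem_range] at hj
    exact (hincr j (hltN j hj)).2.2
  · intro j hj
    have hmesh : partitionMesh N' (fun j => t (idx j)) (Nat.pos_of_ne_zero hN'pos.ne') ≤ 3*δ := by
      rw [partitionMesh]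
      apply Finset.sup'_le
      intro k hk
      rw [Finset.mem_range] at hk
      exact (hincr k (hltN k hk)).2.2
    have hlow := (hincr j (hltN j hj)).2.1
    have hmesh' : partitionMesh N' (fun j => t (idx j)) _ = partitionMesh N' (fun j => t (idx j)) (Nat.pos_of_ne_zero hN'pos.ne') := rfl
    linarith [hmesh]
end

section
/- L² bound for increments of the Mandelbrot–van Ness kernel (estimate (3.8) in the paper). Let H ∈ (0,1), H ≠ 1/2. There exists a constant C_H depending only on H such that for all a > 0 and h ≥ 0: ∫_a^∞ ( (h + r)^{H − 1/2} − r^{H − 1/2} )^2 dr ≤ C_H · a^{2H − 2} · h^2. -/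
open MeasureTheory

lemma mvn_pointwise (p : ℝ) (hp : p < 1) (hp0 : p ≠ 0) {r h : ℝ} (hr : 0 < r) (hh : 0 ≤ h) :
    |(h + r) ^ p - r ^ p| ≤ |p| * h * r ^ (p - 1) := by
  have hne : p - 1 ≠ -1 := by intro H; apply hp0; linarith
  have hmem : (0 : ℝ) ∉ Set.uIcc r (r + h) := by
    rw [Set.uIcc_of_le (by linarith)]
    rintro ⟨h1, -⟩; linarith
  have hint : ∫ x in r..(r + h), x ^ (p - 1) = ((r + h) ^ p - r ^ p) / p := by
    rw [integral_rpow (Or.inr ⟨hne, hmem⟩)]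
    rw [sub_add_cancel]
  have hbound : ‖∫ x in r..(r + h), x ^ (p - 1)‖ ≤ r ^ (p - 1) * |r + h - r| := by
    apply intervalIntegral.norm_integral_le_of_norm_le_const
    intro x hx
    rw [Set.uIoc_of_le (by linarith)] at hx
    rw [Real.norm_eq_abs, abs_of_nonneg (Real.rpow_nonneg (by linarith [hx.1]) _)]
    exact Real.rpow_le_rpow_of_nonpos hr hx.1.le (by linarith)
  rw [hint] at hbound
  rw [Real.norm_eq_abs, abs_div] at hbound
  have : |(r + h) ^ p - r ^ p| / |p| ≤ r ^ (p - 1) * h := by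
    simpa [abs_of_nonneg hh] using hbound
  have hpabs : 0 < |p| := abs_pos.mpr hp0
  rw [div_le_iff₀ hpabs] at this
  calc |(h + r) ^ p - r ^ p| = |(r + h) ^ p - r ^ p| := by rw [add_comm]
    _ ≤ r ^ (p - 1) * h * |p| := this
    _ = |p| * h * r ^ (p - 1) := by ring

/-- **L² bound for increments of the Mandelbrot–van Ness kernel** (estimate (3.8)). For
`H ∈ (0,1)`, `H ≠ 1/2`, there is a constant `C_H` depending only on `H` such that for all
`a > 0` and `h ≥ 0`:
`∫_a^∞ ((h + r)^{H − 1/2} − r^{H − 1/2})² dr ≤ C_H a^{2H − 2} h²`. -/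
theorem mvnKernel_increment_L2_bound
    (H : ℝ) (hH0 : 0 < H) (hH1 : H < 1) (hH : H ≠ 1 / 2) :
    ∃ C : ℝ, 0 ≤ C ∧
    ∀ a h : ℝ, 0 < a → 0 ≤ h →
      (∫ r in Set.Ioi a, ((h + r) ^ (H - 1 / 2) - r ^ (H - 1 / 2)) ^ (2 : ℕ))
        ≤ C * a ^ (2 * H - 2) * h ^ (2 : ℕ) := by
  set p : ℝ := H - 1 / 2 with hpdef
  have hp1 : p < 1 := by simp [hpdef]; linarith
  have hp0 : p ≠ 0 := by simp [hpdef]; intro h'; apply hH; linarith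
  have hden : (0:ℝ) < 2 - 2*H := by linarith
  refine ⟨(H - 1/2)^2 / (2 - 2*H), by positivity, ?_⟩
  intro a h ha hh
  have hexp : 2*H - 3 < -1 := by linarith
  have hInt : IntegrableOn (fun r : ℝ => r ^ (2*H - 3)) (Set.Ioi a) :=
    integrableOn_Ioi_rpow_of_lt hexp ha
  have hIntg : Integrable (fun r : ℝ => (H - 1/2)^2 * h^2 * r ^ (2*H - 3))
      (volume.restrict (Set.Ioi a)) := (hInt.const_mul _)
  have key : ∀ᵐ r ∂(volume.restrict (Set.Ioi a)),
      ((h + r) ^ p - r ^ p) ^ (2 : ℕ) ≤ (H - 1/2)^2 * h^2 * r ^ (2*H - 3) := by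
    filter_upwards [ae_restrict_mem measurableSet_Ioi] with r hr
    have hr0 : 0 < r := lt_trans ha hr
    have hb := mvn_pointwise p hp1 hp0 hr0 hh
    have := sq_le_sq' (by linarith [abs_nonneg ((h + r) ^ p - r ^ p), neg_abs_le ((h + r) ^ p - r ^ p)]) (le_of_abs_le hb)
    -- simpler: square both sides of |x| ≤ y
    have h2 : ((h + r) ^ p - r ^ p) ^ (2:ℕ) ≤ (|p| * h * r ^ (p - 1)) ^ (2:ℕ) := by
      rw [← sq_abs]
      exact pow_le_pow_left₀ (abs_nonneg _) hb 2
    refine h2.trans_eq ?_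
    have hrp : (r ^ (p - 1)) ^ (2:ℕ) = r ^ (2*H - 3) := by
      rw [← Real.rpow_natCast (r ^ (p-1)) 2, ← Real.rpow_mul hr0.le]
      congr 1
      simp only [hpdef]
      ring
    rw [mul_pow, mul_pow, hrp, sq_abs]
  have hmono := integral_mono_of_nonneg (ae_of_all _ (fun r => by positivity)) hIntg key
  refine hmono.trans ?_
  rw [integral_const_mul, integral_Ioi_rpow_of_lt hexp ha]
  have : (2*H - 3 + 1) = 2*H - 2 := by ring
  rw [this]
  apply le_of_eq
  have hne2 : 2*H - 2 ≠ 0 := by intro h'; linarith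
  rw [show (2:ℝ) - 2*H = -(2*H-2) by ring]
  field_simp
end

section
/- Gaussian exponential moment bound (estimate (4.14) in the paper). Let n ∈ ℕ. There exist constants C_n, c_n > 0 depending only on n such that for every real centered Gaussian random variable Z with standard deviation τ > 0, every a ∈ ℝ and every σ > 0: E[ |Z − a|^n e^{ −(Z − a)² / (2σ²) } ] ≤ C_n τ^{−1} σ^{n+1} exp( − c_n a² / (τ² + σ²) ). -/
open MeasureTheory ProbabilityTheory Real
open scoped NNReal ENNReal

lemma integral_quadratic_exp (A B C : ℝ) (hA : 0 < A) :
    ∫ x : ℝ, Real.exp (-(A*x^2 + B*x + C)) = Real.sqrt (π/A) * Real.exp (B^2/(4*A) - C) := by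
  have key : ∀ x : ℝ, Real.exp (-(A*x^2 + B*x + C))
      = Real.exp (B^2/(4*A) - C) * Real.exp (-A * (x + B/(2*A))^2) := by
    intro x
    rw [← Real.exp_add]
    congr 1
    field_simp; ring
  simp_rw [key]
  rw [integral_const_mul, integral_add_right_eq_self (fun y => Real.exp (-A * y^2)) (B/(2*A)),
    integral_gaussian, mul_comm]

lemma pow_le_mul_exp (n : ℕ) {t : ℝ} (ht : 0 ≤ t) :
    t ^ n ≤ ((n.factorial : ℝ) * 4 ^ n + 1) * Real.exp (t ^ 2 / 4) := by
  have hK1 : (1 : ℝ) ≤ (n.factorial : ℝ) * 4 ^ n + 1 := by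
    have : (0:ℝ) ≤ (n.factorial : ℝ) * 4 ^ n := by positivity
    linarith
  have hexp1 : (1 : ℝ) ≤ Real.exp (t ^ 2 / 4) := by
    rw [← Real.exp_zero]; exact Real.exp_le_exp.2 (by positivity)
  rcases le_total t 1 with h | h
  · calc t ^ n ≤ 1 ^ n := pow_le_pow_left₀ ht h n
    _ = 1 := one_pow n
    _ ≤ _ := by nlinarith
  · have hterm : (t ^ 2 / 4) ^ n / (n.factorial : ℝ) ≤ Real.exp (t ^ 2 / 4) := by
      have := Real.sum_le_exp_of_nonneg (x := t ^ 2 / 4) (by positivity) (n + 1)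
      refine le_trans ?_ this
      exact Finset.single_le_sum (f := fun i => (t^2/4)^i / (i.factorial : ℝ))
        (fun i _ => by positivity) (Finset.self_mem_range_succ n)
    have hfac : (0:ℝ) < (n.factorial : ℝ) := by positivity
    have h2 : t ^ (2*n) ≤ (n.factorial : ℝ) * 4 ^ n * Real.exp (t ^ 2 / 4) := by
      have := (div_le_iff₀ hfac).mp hterm
      calc t ^ (2*n) = (t^2/4)^n * 4^n := by rw [div_pow, pow_mul]; field_simp
      _ ≤ (Real.exp (t^2/4) * (n.factorial : ℝ)) * 4^n := by
          have h4 : (0:ℝ) ≤ (4:ℝ)^n := by positivity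
          nlinarith
      _ = (n.factorial : ℝ) * 4 ^ n * Real.exp (t ^ 2 / 4) := by ring
    calc t ^ n ≤ t ^ (2*n) := pow_le_pow_right₀ h (by omega)
    _ ≤ (n.factorial : ℝ) * 4 ^ n * Real.exp (t ^ 2 / 4) := h2
    _ ≤ _ := by nlinarith

lemma integral_gaussianReal_eq (μ : ℝ) (v : ℝ≥0) (hv : v ≠ 0) (g : ℝ → ℝ) :
    ∫ x, g x ∂(gaussianReal μ v) = ∫ x, gaussianPDFReal μ v x * g x := by
  rw [gaussianReal_of_var_ne_zero _ hv]
  have h1 : (gaussianPDF μ v) = fun x => ((Real.toNNReal (gaussianPDFReal μ v x) : ℝ≥0) : ℝ≥0∞) := rfl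
  rw [h1, integral_withDensity_eq_integral_smul
    ((measurable_gaussianPDFReal μ v).real_toNNReal)]
  congr 1
  ext x
  rw [NNReal.smul_def, smul_eq_mul, Real.coe_toNNReal _ (gaussianPDFReal_nonneg μ v x)]

/-- **Gaussian exponential moment bound** (estimate (4.14)). For each `n ∈ ℕ` there are
`C_n, c_n > 0` depending only on `n` such that for every centered real Gaussian `Z` with
standard deviation `τ > 0`, every `a ∈ ℝ` and `σ > 0`:
`E[|Z − a|^n e^{−(Z − a)²/(2σ²)}] ≤ C_n τ⁻¹ σ^{n+1} exp(−c_n a²/(τ² + σ²))`. -/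
theorem gaussian_exponential_moment_bound
    (n : ℕ) :
    ∃ C c : ℝ, 0 < C ∧ 0 < c ∧
    ∀ (Ω : Type) (m0 : MeasurableSpace Ω) (P : Measure Ω), IsProbabilityMeasure P →
    ∀ (Z : Ω → ℝ) (τ : ℝ), 0 < τ → Measurable Z →
      Measure.map Z P = gaussianReal 0 (Real.toNNReal τ ^ 2) →
    ∀ a σ : ℝ, 0 < σ →
      (∫ ω, |Z ω - a| ^ n * Real.exp (-(Z ω - a) ^ 2 / (2 * σ ^ 2)) ∂P)
        ≤ C * τ⁻¹ * σ ^ (n + 1) * Real.exp (-c * a ^ 2 / (τ ^ 2 + σ ^ 2)) := by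
  set K : ℝ := (n.factorial : ℝ) * 4 ^ n + 1 with hKdef
  have hK0 : 0 < K := by positivity
  refine ⟨Real.sqrt 2 * K, 1/4, by positivity, by norm_num, ?_⟩
  intro Ω m0 P hP Z τ hτ hZ hmap a σ hσ
  set v : ℝ≥0 := Real.toNNReal τ ^ 2 with hvdef
  have hv0 : v ≠ 0 := by
    simp only [hvdef, pow_eq_zero_iff, Real.toNNReal_eq_zero, not_le, ne_eq]
    simp [hτ, not_le.2 hτ]
  have hvτ : ((v : ℝ≥0) : ℝ) = τ ^ 2 := by
    simp [hvdef, Real.coe_toNNReal _ hτ.le]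
  set F : ℝ → ℝ := fun x => |x - a| ^ n * Real.exp (-(x - a) ^ 2 / (2 * σ ^ 2)) with hFdef
  have hFcont : Continuous F := by fun_prop
  -- step 1: change of variables
  have h0 : (∫ ω, |Z ω - a| ^ n * Real.exp (-(Z ω - a) ^ 2 / (2 * σ ^ 2)) ∂P)
      = ∫ x, F x ∂(gaussianReal 0 v) := by
    rw [← hmap, integral_map hZ.aemeasurable hFcont.aestronglyMeasurable]
  -- step 2: pointwise bound
  set G : ℝ → ℝ := fun x => K * σ ^ n * Real.exp (-(x - a) ^ 2 / (4 * σ ^ 2)) with hGdef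
  have hkey : ∀ x, F x ≤ G x := by
    intro x
    set u := x - a
    have h := pow_le_mul_exp n (t := |u| / σ) (by positivity)
    have habs : (|u| / σ) ^ n = |u| ^ n / σ ^ n := div_pow _ _ _
    have ht2 : (|u| / σ) ^ 2 / 4 = u ^ 2 / (4 * σ ^ 2) := by
      rw [div_pow, sq_abs]; ring
    rw [habs, ht2, div_le_iff₀ (by positivity)] at h
    have h' : |u| ^ n ≤ K * σ ^ n * Real.exp (u ^ 2 / (4 * σ ^ 2)) := by
      calc |u| ^ n ≤ K * Real.exp (u ^ 2 / (4 * σ ^ 2)) * σ ^ n := h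
      _ = K * σ ^ n * Real.exp (u ^ 2 / (4 * σ ^ 2)) := by ring
    have hexp : Real.exp (u ^ 2 / (4 * σ ^ 2)) * Real.exp (-u ^ 2 / (2 * σ ^ 2))
        = Real.exp (-u ^ 2 / (4 * σ ^ 2)) := by
      rw [← Real.exp_add]; congr 1; field_simp; ring
    calc F x = |u| ^ n * Real.exp (-u ^ 2 / (2 * σ ^ 2)) := rfl
    _ ≤ (K * σ ^ n * Real.exp (u ^ 2 / (4 * σ ^ 2))) * Real.exp (-u ^ 2 / (2 * σ ^ 2)) := by
        have := Real.exp_pos (-u ^ 2 / (2 * σ ^ 2))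
        nlinarith
    _ = K * σ ^ n * (Real.exp (u ^ 2 / (4 * σ ^ 2)) * Real.exp (-u ^ 2 / (2 * σ ^ 2))) := by ring
    _ = G x := by rw [hexp]
  -- step 3: integrability of G over the probability measure
  haveI : IsProbabilityMeasure (gaussianReal 0 v) := inferInstance
  have hGint : Integrable G (gaussianReal 0 v) := by
    refine Integrable.mono' (integrable_const (K * σ ^ n))
      (by fun_prop : Continuous G).aestronglyMeasurable (ae_of_all _ fun x => ?_)
    have h1 : Real.exp (-(x - a) ^ 2 / (4 * σ ^ 2)) ≤ 1 := by
      rw [Real.exp_le_one_iff]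
      rw [neg_div]
      exact neg_nonpos.2 (by positivity)
    have h2 : 0 < Real.exp (-(x - a) ^ 2 / (4 * σ ^ 2)) := Real.exp_pos _
    rw [Real.norm_eq_abs, abs_of_nonneg (by positivity)]
    calc K * σ ^ n * Real.exp (-(x - a) ^ 2 / (4 * σ ^ 2)) ≤ K * σ ^ n * 1 := by
          apply mul_le_mul_of_nonneg_left h1 (by positivity)
    _ = K * σ ^ n := mul_one _
  have h3 : ∫ x, F x ∂(gaussianReal 0 v) ≤ ∫ x, G x ∂(gaussianReal 0 v) :=
    integral_mono_of_nonneg (ae_of_all _ fun x => by positivity) hGint (ae_of_all _ hkey)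
  -- step 4: compute the Gaussian integral of the dominating function
  set A : ℝ := 1 / (2 * τ ^ 2) + 1 / (4 * σ ^ 2) with hAdef
  have hA0 : 0 < A := by positivity
  have h4 : ∫ x, G x ∂(gaussianReal 0 v)
      = K * σ ^ n * ((Real.sqrt (2 * π * τ ^ 2))⁻¹ * (Real.sqrt (π / A)
        * Real.exp ((-(a / (2 * σ ^ 2))) ^ 2 / (4 * A) - a ^ 2 / (4 * σ ^ 2)))) := by
    rw [hGdef]
    simp_rw [show (fun x => K * σ ^ n * Real.exp (-(x - a) ^ 2 / (4 * σ ^ 2)))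
      = fun x => K * σ ^ n * ((fun y => Real.exp (-(y - a) ^ 2 / (4 * σ ^ 2))) x) from rfl]
    rw [integral_const_mul]
    congr 1
    rw [integral_gaussianReal_eq 0 v hv0]
    have hpt : ∀ x : ℝ, gaussianPDFReal 0 v x * Real.exp (-(x - a) ^ 2 / (4 * σ ^ 2))
        = (Real.sqrt (2 * π * τ ^ 2))⁻¹
          * Real.exp (-(A * x ^ 2 + (-(a / (2 * σ ^ 2))) * x + a ^ 2 / (4 * σ ^ 2))) := by
      intro x
      rw [gaussianPDFReal]
      rw [hvτ]
      rw [mul_assoc, ← Real.exp_add]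
      congr 2
      rw [hAdef]
      field_simp
      ring
    simp_rw [hpt]
    rw [integral_const_mul, integral_quadratic_exp _ _ _ hA0]
  -- step 5: bound the constants
  have hsqrt : (Real.sqrt (2 * π * τ ^ 2))⁻¹ * Real.sqrt (π / A) ≤ Real.sqrt 2 * σ * τ⁻¹ := by
    have h2πτ : (0:ℝ) < 2 * π * τ ^ 2 := by positivity
    rw [← Real.sqrt_inv, ← Real.sqrt_mul (by positivity)]
    have hrhs : Real.sqrt 2 * σ * τ⁻¹ = Real.sqrt (2 * σ ^ 2 * (τ ^ 2)⁻¹) := by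
      rw [Real.sqrt_mul (by positivity), Real.sqrt_mul (by norm_num), Real.sqrt_sq hσ.le,
        Real.sqrt_inv, Real.sqrt_sq hτ.le]
    rw [hrhs]
    apply Real.sqrt_le_sqrt
    rw [div_eq_mul_inv]
    have hπ0 : (0:ℝ) < π := Real.pi_pos
    have hAineq : 1 / (4 * σ ^ 2) ≤ A := by
      rw [hAdef]
      have h0 : (0:ℝ) ≤ 1 / (2 * τ ^ 2) := by positivity
      linarith
    have hinv : A⁻¹ ≤ 4 * σ ^ 2 := by
      have h := one_div_le_one_div_of_le (by positivity : (0:ℝ) < 1 / (4 * σ ^ 2)) hAineq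
      rwa [one_div_one_div, one_div] at h
    have heq : (2 * π * τ ^ 2)⁻¹ * (π * A⁻¹) = A⁻¹ * (2 * τ ^ 2)⁻¹ := by
      field_simp
    rw [heq]
    calc A⁻¹ * (2 * τ ^ 2)⁻¹ ≤ (4 * σ ^ 2) * (2 * τ ^ 2)⁻¹ :=
          mul_le_mul_of_nonneg_right hinv (by positivity)
    _ = 2 * σ ^ 2 * (τ ^ 2)⁻¹ := by
        field_simp
        ring
  have hexp : Real.exp ((-(a / (2 * σ ^ 2))) ^ 2 / (4 * A) - a ^ 2 / (4 * σ ^ 2))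
      ≤ Real.exp (-(1/4) * a ^ 2 / (τ ^ 2 + σ ^ 2)) := by
    apply Real.exp_le_exp.2
    have heq : (-(a / (2 * σ ^ 2))) ^ 2 / (4 * A) - a ^ 2 / (4 * σ ^ 2)
        = -a ^ 2 / (2 * (2 * σ ^ 2 + τ ^ 2)) := by
      rw [hAdef]; field_simp; ring
    rw [heq]
    rw [div_le_div_iff₀ (by positivity) (by positivity)]
    nlinarith [sq_nonneg a, sq_nonneg σ, sq_nonneg τ, mul_pos hσ hσ, mul_pos hτ hτ,
      mul_nonneg (sq_nonneg a) (sq_nonneg σ), mul_nonneg (sq_nonneg a) (sq_nonneg τ)]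
  -- combine
  rw [h0]
  refine h3.trans ?_
  rw [h4]
  have hfinal : K * σ ^ n * ((Real.sqrt (2 * π * τ ^ 2))⁻¹ * (Real.sqrt (π / A)
        * Real.exp ((-(a / (2 * σ ^ 2))) ^ 2 / (4 * A) - a ^ 2 / (4 * σ ^ 2))))
      ≤ K * σ ^ n * ((Real.sqrt 2 * σ * τ⁻¹) * Real.exp (-(1/4) * a ^ 2 / (τ ^ 2 + σ ^ 2))) := by
    apply mul_le_mul_of_nonneg_left _ (by positivity)
    have he0 : 0 ≤ Real.exp ((-(a / (2 * σ ^ 2))) ^ 2 / (4 * A) - a ^ 2 / (4 * σ ^ 2)) :=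
      (Real.exp_pos _).le
    calc (Real.sqrt (2 * π * τ ^ 2))⁻¹ * (Real.sqrt (π / A) * Real.exp _)
        = ((Real.sqrt (2 * π * τ ^ 2))⁻¹ * Real.sqrt (π / A)) * Real.exp _ := by ring
    _ ≤ (Real.sqrt 2 * σ * τ⁻¹) * Real.exp (-(1/4) * a ^ 2 / (τ ^ 2 + σ ^ 2)) := by
        apply mul_le_mul hsqrt hexp he0 (by positivity)
  refine hfinal.trans_eq ?_
  rw [pow_succ]
  ring
end

section
/- Elementary Gaussian-difference inequality (estimate (4.10) in the paper). For all z, η ∈ ℝ: | e^{−(z − η)²} − e^{−η²} | ≤ 3 |η| e^{−η²/4} |z| + 2 · 1_{ |η| ≤ 2|z| }. -/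
/-- **Elementary Gaussian-difference inequality** (estimate (4.10)). For all `z, η ∈ ℝ`:
`|e^{−(z − η)²} − e^{−η²}| ≤ 3 |η| e^{−η²/4} |z| + 2 · 1_{|η| ≤ 2|z|}`. -/
theorem gaussian_difference_inequality (z η : ℝ) :
    |Real.exp (-(z - η) ^ 2) - Real.exp (-η ^ 2)|
      ≤ 3 * |η| * Real.exp (-η ^ 2 / 4) * |z|
        + 2 * (if |η| ≤ 2 * |z| then (1 : ℝ) else 0) := by
  by_cases h : |η| ≤ 2 * |z|
  · simp only [h, if_pos]
    have h1 : Real.exp (-(z - η) ^ 2) ≤ 1 := by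
      rw [Real.exp_le_one_iff]; nlinarith [sq_nonneg (z - η)]
    have h2 : Real.exp (-η ^ 2) ≤ 1 := by
      rw [Real.exp_le_one_iff]; nlinarith [sq_nonneg η]
    have p1 : 0 < Real.exp (-(z - η) ^ 2) := Real.exp_pos _
    have p2 : 0 < Real.exp (-η ^ 2) := Real.exp_pos _
    have habs : |Real.exp (-(z - η) ^ 2) - Real.exp (-η ^ 2)| ≤ 2 := by
      rw [abs_le]; constructor <;> linarith
    have hnn : 0 ≤ 3 * |η| * Real.exp (-η ^ 2 / 4) * |z| :=
      mul_nonneg (mul_nonneg (mul_nonneg (by norm_num) (abs_nonneg _))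
        (Real.exp_pos _).le) (abs_nonneg _)
    linarith
  · simp only [h, if_neg, not_false_iff, mul_zero, add_zero]
    push_neg at h
    set C : ℝ := 3 * |η| * Real.exp (-η ^ 2 / 4) with hC
    set f : ℝ → ℝ := fun t => Real.exp (-(t - η) ^ 2) with hf
    set f' : ℝ → ℝ := fun t => Real.exp (-(t - η) ^ 2) * -(2 * (t - η)) with hf'
    have hderiv : ∀ t : ℝ, HasDerivAt f (f' t) t := by
      intro t
      have h1 : HasDerivAt (fun t : ℝ => t - η) 1 t := (hasDerivAt_id t).sub_const η
      have h2 : HasDerivAt (fun t : ℝ => (t - η) ^ 2) (2 * (t - η)) t := by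
        have := h1.fun_pow 2
        simpa using this
      have h3 : HasDerivAt (fun t : ℝ => -(t - η) ^ 2) (-(2 * (t - η))) t := h2.neg
      exact h3.exp
    have hbound : ∀ t ∈ Set.uIcc (0 : ℝ) z, ‖f' t‖ ≤ C := by
      intro t ht
      have htz : |t| ≤ |z| := by
        rcases Set.mem_uIcc.1 ht with ⟨h1, h2⟩ | ⟨h1, h2⟩ <;> rw [abs_le] <;>
          constructor <;> cases abs_cases z <;> linarith
      have hlow : |η| / 2 ≤ |t - η| := by
        have : |η| - |t| ≤ |t - η| := by
          calc |η| - |t| ≤ |η - t| := abs_sub_abs_le_abs_sub η t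
          _ = |t - η| := abs_sub_comm η t
        linarith
      have hhigh : |t - η| ≤ 3 / 2 * |η| := by
        calc |t - η| ≤ |t| + |η| := abs_sub t η
        _ ≤ 3 / 2 * |η| := by linarith
      have hsq : -(t - η) ^ 2 ≤ -η ^ 2 / 4 := by
        have : (|η| / 2) ^ 2 ≤ |t - η| ^ 2 := by
          apply pow_le_pow_left₀ (by positivity) hlow
        rw [sq_abs] at this
        nlinarith [sq_abs η]
      have hexp : Real.exp (-(t - η) ^ 2) ≤ Real.exp (-η ^ 2 / 4) :=
        Real.exp_le_exp.2 hsq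
      have : ‖f' t‖ = Real.exp (-(t - η) ^ 2) * (2 * |t - η|) := by
        simp only [hf', Real.norm_eq_abs, abs_mul, abs_neg,
          abs_of_pos (Real.exp_pos _), abs_mul]
        norm_num
      rw [this, hC]
      calc Real.exp (-(t - η) ^ 2) * (2 * |t - η|)
          ≤ Real.exp (-η ^ 2 / 4) * (2 * (3 / 2 * |η|)) := by
            apply mul_le_mul hexp (by linarith) (by positivity) (Real.exp_pos _).le
        _ = 3 * |η| * Real.exp (-η ^ 2 / 4) := by ring
    have hconv : Convex ℝ (Set.uIcc (0 : ℝ) z) := convex_uIcc _ _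
    have key := hconv.norm_image_sub_le_of_norm_hasDerivWithin_le
      (fun t ht => (hderiv t).hasDerivWithinAt) hbound
      (Set.left_mem_uIcc) (Set.right_mem_uIcc)
    simp only [hf, Real.norm_eq_abs, sub_zero] at key
    calc |Real.exp (-(z - η) ^ 2) - Real.exp (-η ^ 2)|
        = |f z - f 0| := by simp [hf]
      _ ≤ C * |z| := key
      _ = 3 * |η| * Real.exp (-η ^ 2 / 4) * |z| := by rw [hC]
end

section
/- Deterministic weak convergence of discretized local-time sums (Corollary 4.4). Let T > 0, H ∈ (0,1), m > 1, and let B ∈ C([0,T], ℝ) be a continuous function. For a partition π of [0,T], define L̃^π_T(a) := Σ_{[s,t] ∈ π, B_s < a < B_t} |B_t − a|^{1/H − 1} for a ∈ ℝ. Let (π_n) be a sequence of partitions of [0,T] such that lim_{n→∞} sup_{[s,t] ∈ π_n} |B_t − B_s| = 0, and suppose there exists ℓ ∈ L^m(ℝ) such that lim_{n→∞} ∫_ℝ | Σ_{[s,t] ∈ π_n, B_s < a < B_t} |B_t − B_s|^{1/H − 1} − ℓ(a) |^m da = 0. Then L̃^{π_n}_T converges to H·ℓ weakly in L^m(ℝ);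 that is, for every g in the dual space L^{m'}(ℝ) with 1/m + 1/m' = 1, ∫_ℝ L̃^{π_n}_T(a) g(a) da → H ∫_ℝ ℓ(a) g(a) da as n → ∞. -/
set_option maxHeartbeats 1000000


open MeasureTheory Filter
open scoped ENNReal NNReal

lemma aux_holder {q q' : ℝ≥0∞} (hq : 1/q + 1/q' = 1) {f h : ℝ → ℝ}
    (hf : MemLp f q volume) (hh : MemLp h q' volume) :
    Integrable (fun a => f a * h a) volume ∧
    |∫ a, f a * h a| ≤ (eLpNorm f q volume).toReal * (eLpNorm h q' volume).toReal := by
  have hb : eLpNorm (fun a => f a * h a) 1 volume ≤ eLpNorm f q volume * eLpNorm h q' volume := by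
    haveI : ENNReal.HolderTriple q q' 1 := ⟨by simpa [one_div] using hq⟩
    simpa using eLpNorm_le_eLpNorm_mul_eLpNorm'_of_norm hf.1 hh.1 (· * ·) 1
      (Eventually.of_forall fun a => by simp [norm_mul])
  have hint : Integrable (fun a => f a * h a) volume := by
    rw [← memLp_one_iff_integrable]
    exact ⟨hf.1.mul hh.1, lt_of_le_of_lt hb (ENNReal.mul_lt_top hf.2 hh.2)⟩
  refine ⟨hint, ?_⟩
  have h1 : |∫ a, f a * h a| ≤ ∫ a, ‖f a * h a‖ := by
    simpa using norm_integral_le_integral_norm (fun a => f a * h a)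
  have h2 : ∫ a, ‖f a * h a‖ = (eLpNorm (fun a => f a * h a) 1 volume).toReal := by
    rw [integral_norm_eq_lintegral_enorm hint.1, eLpNorm_one_eq_lintegral_enorm]
  refine h1.trans ?_
  rw [h2, ← ENNReal.toReal_mul]
  exact ENNReal.toReal_mono (ENNReal.mul_ne_top hf.2.ne hh.2.ne) hb

lemma aux_psi_integral {p H : ℝ} (hp : 0 < p) (hH : H * (p + 1) = 1) (s e : ℝ) :
    ∫ a, (Set.Ioo s e).indicator (fun a => |e - a| ^ p - H * |e - s| ^ p) a = 0 := by
  rcases le_or_gt e s with h | h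
  · rw [Set.Ioo_eq_empty (not_lt.mpr h)]
    simp
  · have hmeas : Measurable fun a : ℝ => |e - a| ^ p :=
      ((continuous_const.sub continuous_id).abs.rpow_const fun _ => Or.inr hp.le).measurable
    have hI1 : IntegrableOn (fun a => |e - a| ^ p) (Set.Ioo s e) volume := by
      apply Measure.integrableOn_of_bounded (M := |e - s| ^ p) measure_Ioo_lt_top.ne
        hmeas.aestronglyMeasurable
      refine (ae_restrict_iff' measurableSet_Ioo).mpr (Eventually.of_forall fun a ha => ?_)
      rw [Real.norm_eq_abs, abs_of_nonneg (Real.rpow_nonneg (abs_nonneg _) _)]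
      apply Real.rpow_le_rpow (abs_nonneg _) ?_ hp.le
      rw [abs_of_pos (by linarith [ha.2] : (0:ℝ) < e - a),
        abs_of_pos (by linarith : (0:ℝ) < e - s)]
      linarith [ha.1]
    have hI2 : IntegrableOn (fun _ : ℝ => H * |e - s| ^ p) (Set.Ioo s e) volume :=
      integrableOn_const measure_Ioo_lt_top.ne
    rw [integral_indicator measurableSet_Ioo, integral_sub hI1 hI2]
    have h1 : ∫ a in Set.Ioo s e, |e - a| ^ p = (e - s) ^ (p + 1) / (p + 1) := by
      have := setIntegral_congr_fun (μ := volume) (f := fun a => |e - a| ^ p)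
        (g := fun a => (e - a) ^ p) (measurableSet_Ioo (a := s) (b := e))
        (fun a ha => by dsimp only; rw [abs_of_pos (by linarith [ha.2] : (0:ℝ) < e - a)])
      rw [this, ← integral_Ioc_eq_integral_Ioo, ← intervalIntegral.integral_of_le h.le]
      rw [intervalIntegral.integral_comp_sub_left (fun x => x ^ p) e, sub_self]
      rw [integral_rpow (Or.inl (by linarith : (-1:ℝ) < p))]
      rw [Real.zero_rpow (by linarith : p + 1 ≠ 0), sub_zero]
    have h2 : ∫ _ in Set.Ioo s e, H * |e - s| ^ p = (e - s) * (H * (e - s) ^ p) := by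
      rw [setIntegral_const, measureReal_def, Real.volume_Ioo, smul_eq_mul,
        ENNReal.toReal_ofReal (by linarith : (0:ℝ) ≤ e - s),
        abs_of_pos (by linarith : (0:ℝ) < e - s)]
    rw [h1, h2]
    have hes : (0:ℝ) < e - s := by linarith
    have h3 : (e - s) ^ (p + 1) = (e - s) ^ p * (e - s) := Real.rpow_add_one hes.ne' p
    have hp1 : (0:ℝ) < p + 1 := by linarith
    have hHval : H = 1 / (p + 1) := by field_simp; linarith [hH]
    rw [h3, hHval]
    field_simp
    ring

lemma aux_ite_indicator (u v : ℝ) (f : ℝ → ℝ) (a : ℝ) :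
    (if u < a ∧ a < v then f a else 0) = (Set.Ioo u v).indicator f a := by
  simp [Set.indicator_apply, Set.mem_Ioo]

/-- **Deterministic weak convergence of discretized local-time sums** (Corollary 4.4).
Let `B ∈ C([0,T], ℝ)`, `H ∈ (0,1)`, `m > 1`, and let `(π_n)` be partitions of `[0,T]`
whose oscillation `sup_{[s,t] ∈ π_n} |B_t − B_s|` tends to `0`. If
`Σ_{[s,t] ∈ π_n, B_s < a < B_t} |B_t − B_s|^{1/H − 1}` converges to `ℓ` in `L^m(ℝ)`,
then `L̃^{π_n}_T(a) = Σ_{[s,t] ∈ π_n, B_s < a < B_t} |B_t − a|^{1/H − 1}` converges to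
`H·ℓ` weakly in `L^m(ℝ)`: tested against any `g ∈ L^{m'}(ℝ)` with `1/m + 1/m' = 1`. -/
theorem discretized_local_time_weak_convergence
    (T H m : ℝ) (hT : 0 < T) (hH0 : 0 < H) (hH1 : H < 1) (hm : 1 < m)
    (B : ℝ → ℝ) (hB : ContinuousOn B (Set.Icc 0 T))
    -- the sequence of partitions `π_n` of `[0, T]`
    (N : ℕ → ℕ) (t : ℕ → ℕ → ℝ)
    (hN : ∀ n, 0 < N n) (ht0 : ∀ n, t n 0 = 0) (htN : ∀ n, t n (N n) = T)
    (hmono : ∀ n, ∀ i < N n, t n i < t n (i + 1))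
    -- the oscillation of `B` along `π_n` tends to `0`
    (hosc : ∀ ε : ℝ, 0 < ε → ∃ n0 : ℕ, ∀ n ≥ n0, ∀ i < N n,
      |B (t n (i + 1)) - B (t n i)| ≤ ε)
    -- `ℓ ∈ L^m(ℝ)` and `Σ |B_t − B_s|^{1/H−1} 1_{B_s < a < B_t} → ℓ` in `L^m(ℝ)`
    (ℓ : ℝ → ℝ) (hℓ : MemLp ℓ (ENNReal.ofReal m) volume)
    (hconv : Tendsto
      (fun n => ∫ a : ℝ,
        |(∑ i ∈ Finset.range (N n),
            if B (t n i) < a ∧ a < B (t n (i + 1))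
            then |B (t n (i + 1)) - B (t n i)| ^ (1 / H - 1) else 0) - ℓ a| ^ m)
      atTop (nhds 0))
    -- the dual exponent and a test function `g ∈ L^{m'}(ℝ)`
    (m' : ℝ) (hm' : 1 / m + 1 / m' = 1)
    (g : ℝ → ℝ) (hg : MemLp g (ENNReal.ofReal m') volume) :
    Tendsto
      (fun n => ∫ a : ℝ,
        (∑ i ∈ Finset.range (N n),
          if B (t n i) < a ∧ a < B (t n (i + 1))
          then |B (t n (i + 1)) - a| ^ (1 / H - 1) else 0) * g a)
      atTop (nhds (H * ∫ a : ℝ, ℓ a * g a)) := by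
  classical
  have hm0 : (0:ℝ) < m := by linarith
  have hm'0 : (0:ℝ) < m' := by
    have h1 : 1/m < 1 := by rw [div_lt_one hm0]; exact hm
    have h2 : 0 < 1/m' := by linarith
    exact (one_div_pos).mp h2
  set p : ℝ := 1 / H - 1 with hp_def
  have hp0 : 0 < p := by
    have h1 : 1 < 1 / H := by rw [lt_div_iff₀ hH0]; linarith
    rw [hp_def]; linarith
  have hHp : H * (p + 1) = 1 := by
    rw [hp_def]; field_simp; ring
  set pm : ℝ≥0∞ := ENNReal.ofReal m with hpm_def
  set pm' : ℝ≥0∞ := ENNReal.ofReal m' with hpm'_def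
  have hpm_ne_top : pm ≠ ⊤ := ENNReal.ofReal_ne_top
  have hpm'_ne_top : pm' ≠ ⊤ := ENNReal.ofReal_ne_top
  have hpm_ne_zero : pm ≠ 0 := (ENNReal.ofReal_pos.mpr hm0).ne'
  have hpm_one : (1:ℝ≥0∞) ≤ pm := ENNReal.one_le_ofReal.mpr hm.le
  have hconj : 1 / pm + 1 / pm' = 1 := by
    rw [hpm_def, hpm'_def, one_div, one_div, ← ENNReal.ofReal_inv_of_pos hm0,
      ← ENNReal.ofReal_inv_of_pos hm'0,
      ← ENNReal.ofReal_add (by positivity) (by positivity)]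
    rw [show m⁻¹ + m'⁻¹ = 1 by rw [← one_div, ← one_div]; exact hm']
    exact ENNReal.ofReal_one
  set F : ℕ → ℝ → ℝ := fun n a => ∑ i ∈ Finset.range (N n),
      if B (t n i) < a ∧ a < B (t n (i + 1))
      then |B (t n (i + 1)) - B (t n i)| ^ p else 0 with hF_def
  set L : ℕ → ℝ → ℝ := fun n a => ∑ i ∈ Finset.range (N n),
      if B (t n i) < a ∧ a < B (t n (i + 1))
      then |B (t n (i + 1)) - a| ^ p else 0 with hL_def
  have hconv' : Tendsto (fun n => ∫ a : ℝ, |F n a - ℓ a| ^ m) atTop (nhds 0) := hconv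
  -- indicator forms
  have hFif : ∀ n a, F n a = ∑ i ∈ Finset.range (N n),
      (Set.Ioo (B (t n i)) (B (t n (i + 1)))).indicator
        (fun _ => |B (t n (i + 1)) - B (t n i)| ^ p) a := by
    intro n a
    rw [hF_def]
    exact Finset.sum_congr rfl fun i _ =>
      aux_ite_indicator _ _ (fun _ => |B (t n (i + 1)) - B (t n i)| ^ p) a
  have hLif : ∀ n a, L n a = ∑ i ∈ Finset.range (N n),
      (Set.Ioo (B (t n i)) (B (t n (i + 1)))).indicator
        (fun x => |B (t n (i + 1)) - x| ^ p) a := by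
    intro n a
    rw [hL_def]
    exact Finset.sum_congr rfl fun i _ =>
      aux_ite_indicator _ _ (fun x => |B (t n (i + 1)) - x| ^ p) a
  have hioo_fin : ∀ u v : ℝ, volume (Set.Ioo u v) ≠ ⊤ := fun u v => measure_Ioo_lt_top.ne
  have hcontL : ∀ e : ℝ, Continuous fun a : ℝ => |e - a| ^ p := fun e =>
    (continuous_const.sub continuous_id).abs.rpow_const fun _ => Or.inr hp0.le
  have hFmeas : ∀ n, Measurable (F n) := by
    intro n
    rw [show F n = fun a => ∑ i ∈ Finset.range (N n),
      (Set.Ioo (B (t n i)) (B (t n (i + 1)))).indicator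
        (fun _ => |B (t n (i + 1)) - B (t n i)| ^ p) a from funext (hFif n)]
    exact Finset.measurable_sum _ fun i _ => measurable_const.indicator measurableSet_Ioo
  have hLmeas : ∀ n, Measurable (L n) := by
    intro n
    rw [show L n = fun a => ∑ i ∈ Finset.range (N n),
      (Set.Ioo (B (t n i)) (B (t n (i + 1)))).indicator
        (fun x => |B (t n (i + 1)) - x| ^ p) a from funext (hLif n)]
    exact Finset.measurable_sum _ fun i _ =>
      ((hcontL _).measurable).indicator measurableSet_Ioo
  have hFmem : ∀ n, MemLp (F n) pm volume := by
    intro n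
    rw [show F n = fun a => ∑ i ∈ Finset.range (N n),
      (Set.Ioo (B (t n i)) (B (t n (i + 1)))).indicator
        (fun _ => |B (t n (i + 1)) - B (t n i)| ^ p) a from funext (hFif n)]
    exact memLp_finset_sum _ fun i _ =>
      memLp_indicator_const pm measurableSet_Ioo _ (Or.inr (hioo_fin _ _))
  have hF0 : ∀ n a, 0 ≤ F n a := by
    intro n a
    rw [hF_def]
    apply Finset.sum_nonneg
    intro i _
    split
    · exact Real.rpow_nonneg (abs_nonneg _) _
    · exact le_rfl
  have hL0 : ∀ n a, 0 ≤ L n a := by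
    intro n a
    rw [hL_def]
    apply Finset.sum_nonneg
    intro i _
    split
    · exact Real.rpow_nonneg (abs_nonneg _) _
    · exact le_rfl
  have hLleF : ∀ n a, L n a ≤ F n a := by
    intro n a
    rw [hF_def, hL_def]
    apply Finset.sum_le_sum
    intro i _
    by_cases hcond : B (t n i) < a ∧ a < B (t n (i + 1))
    · rw [if_pos hcond, if_pos hcond]
      apply Real.rpow_le_rpow (abs_nonneg _) ?_ hp0.le
      rw [abs_of_pos (by linarith [hcond.2] : (0:ℝ) < B (t n (i + 1)) - a)]
      calc B (t n (i + 1)) - a ≤ B (t n (i + 1)) - B (t n i) := by linarith [hcond.1]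
        _ ≤ |B (t n (i + 1)) - B (t n i)| := le_abs_self _
    · rw [if_neg hcond, if_neg hcond]
  have hLmem : ∀ n, MemLp (L n) pm volume := fun n =>
    MemLp.of_le (hFmem n) (hLmeas n).aestronglyMeasurable
      (Eventually.of_forall fun a => by
        rw [Real.norm_eq_abs, Real.norm_eq_abs, abs_of_nonneg (hL0 n a),
          abs_of_nonneg (hF0 n a)]
        exact hLleF n a)
  -- eLpNorm convergence
  have hFconv : Tendsto (fun n => eLpNorm (fun a => F n a - ℓ a) pm volume) atTop (nhds 0) := by
    have key : ∀ n, eLpNorm (fun a => F n a - ℓ a) pm volume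
        = ENNReal.ofReal ((∫ a, |F n a - ℓ a| ^ m) ^ m⁻¹) := by
      intro n
      have hmem : MemLp (fun a => F n a - ℓ a) pm volume := (hFmem n).sub hℓ
      rw [hmem.eLpNorm_eq_integral_rpow_norm hpm_ne_zero hpm_ne_top]
      have htr : pm.toReal = m := by rw [hpm_def]; exact ENNReal.toReal_ofReal hm0.le
      simp only [htr, Real.norm_eq_abs, one_div]
    rw [show (fun n => eLpNorm (fun a => F n a - ℓ a) pm volume)
        = fun n => ENNReal.ofReal ((∫ a, |F n a - ℓ a| ^ m) ^ m⁻¹) from funext key]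
    have h2 : Tendsto (fun n => (∫ a, |F n a - ℓ a| ^ m) ^ m⁻¹) atTop (nhds 0) := by
      have h3 := hconv'.rpow_const (p := m⁻¹) (Or.inr (inv_nonneg.mpr hm0.le))
      simpa [Real.zero_rpow (inv_ne_zero hm0.ne')] using h3
    have h4 := (ENNReal.continuous_ofReal.tendsto 0).comp h2
    simpa [Function.comp_def] using h4
  -- partition points stay in [0, T]
  have htle : ∀ n i, i ≤ N n → ∀ j, j ≤ i → t n j ≤ t n i := by
    intro n i
    induction i with
    | zero => intro _ j hj; rw [Nat.le_zero.mp hj]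
    | succ k ih =>
      intro hk j hj
      rcases Nat.eq_or_lt_of_le hj with rfl | hlt
      · exact le_rfl
      · have hjk : j ≤ k := Nat.lt_succ_iff.mp hlt
        exact le_trans (ih (by omega) j hjk) (le_of_lt (hmono n k (by omega)))
  have htmem : ∀ n i, i ≤ N n → t n i ∈ Set.Icc 0 T := by
    intro n i hi
    constructor
    · have h := htle n i hi 0 (Nat.zero_le _)
      rw [ht0 n] at h; exact h
    · have h := htle n (N n) le_rfl i hi
      rw [htN n] at h; exact h
  obtain ⟨M, hM⟩ := (isCompact_Icc (a := (0:ℝ)) (b := T)).exists_bound_of_continuousOn hB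
  have hBM : ∀ n i, i ≤ N n → |B (t n i)| ≤ M := fun n i hi => hM _ (htmem n i hi)
  have hsuppF : ∀ n a, a ∉ Set.Icc (-M) M → F n a = 0 := by
    intro n a ha
    rw [hF_def]
    apply Finset.sum_eq_zero
    intro i hi
    rw [if_neg]
    rintro ⟨h1, h2⟩
    apply ha
    have hiN := Finset.mem_range.mp hi
    have hb1 := abs_le.mp (hBM n i hiN.le)
    have hb2 := abs_le.mp (hBM n (i + 1) hiN)
    exact ⟨by linarith [hb1.1], by linarith [hb2.2]⟩
  -- Step A
  have hA : Tendsto (fun n => ∫ a, F n a * g a) atTop (nhds (∫ a, ℓ a * g a)) := by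
    rw [tendsto_iff_dist_tendsto_zero]
    apply squeeze_zero (g := fun n =>
      (eLpNorm (fun a => F n a - ℓ a) pm volume).toReal * (eLpNorm g pm' volume).toReal)
      (fun n => dist_nonneg)
    · intro n
      rw [Real.dist_eq]
      have h1 : (∫ a, F n a * g a) - ∫ a, ℓ a * g a = ∫ a, (F n a - ℓ a) * g a := by
        rw [← integral_sub (aux_holder hconj (hFmem n) hg).1 (aux_holder hconj hℓ hg).1]
        congr 1; funext a; ring
      rw [h1]
      exact (aux_holder hconj ((hFmem n).sub hℓ) hg).2
    · have h3 : Tendsto (fun n => (eLpNorm (fun a => F n a - ℓ a) pm volume).toReal)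
          atTop (nhds 0) := by
        have h4 := (ENNReal.tendsto_toReal (by simp : (0:ℝ≥0∞) ≠ ⊤)).comp hFconv
        simpa [Function.comp_def] using h4
      simpa using h3.mul_const (eLpNorm g pm' volume).toReal
  -- Step B: key quantitative estimate
  have key : ∀ ε : ℝ, 0 < ε → ∃ n0 : ℕ, ∀ n ≥ n0,
      |(∫ a, L n a * g a) - H * ∫ a, F n a * g a| ≤ ε := by
    intro ε hε
    set Kinf : ℝ≥0∞ := 1 + eLpNorm ℓ pm volume with hK_def
    have hK_ne_top : Kinf ≠ ⊤ := by
      rw [hK_def]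
      exact ENNReal.add_ne_top.mpr ⟨by simp, hℓ.2.ne⟩
    set KR := Kinf.toReal with hKR_def
    have hKR0 : 0 ≤ KR := ENNReal.toReal_nonneg
    obtain ⟨n1, hn1⟩ : ∃ n1, ∀ n ≥ n1,
        eLpNorm (fun a => F n a - ℓ a) pm volume ≤ 1 := by
      have h := hFconv.eventually_lt_const (by norm_num : (0:ℝ≥0∞) < 1)
      rw [eventually_atTop] at h
      obtain ⟨n1, h⟩ := h
      exact ⟨n1, fun n hn => (h n hn).le⟩
    have hFB : ∀ n, n ≥ n1 → eLpNorm (F n) pm volume ≤ Kinf := by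
      intro n hn
      have h1 : F n = (fun a => F n a - ℓ a) + ℓ := funext fun a => by simp
      calc eLpNorm (F n) pm volume
          = eLpNorm ((fun a => F n a - ℓ a) + ℓ) pm volume := by rw [← h1]
        _ ≤ eLpNorm (fun a => F n a - ℓ a) pm volume + eLpNorm ℓ pm volume :=
            eLpNorm_add_le ((hFmeas n).aestronglyMeasurable.sub hℓ.1) hℓ.1 hpm_one
        _ ≤ 1 + eLpNorm ℓ pm volume := add_le_add (hn1 n hn) le_rfl
    have hLHFB : ∀ n, n ≥ n1 →
        eLpNorm (fun a => L n a - H * F n a) pm volume ≤ Kinf := by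
      intro n hn
      refine le_trans (eLpNorm_mono fun a => ?_) (hFB n hn)
      rw [Real.norm_eq_abs, Real.norm_eq_abs, abs_of_nonneg (hF0 n a)]
      have h1 := hL0 n a; have h2 := hLleF n a; have h3 := hF0 n a
      have h4 : 0 ≤ H * F n a := mul_nonneg hH0.le h3
      have h5 : H * F n a ≤ F n a := mul_le_of_le_one_left h3 hH1.le
      rw [abs_le]
      constructor <;> linarith
    set ind : ℝ → ℝ := (Set.Icc (-M) M).indicator (fun _ => (1:ℝ)) with hind_def
    have hind_mem : MemLp ind pm' volume :=
      memLp_indicator_const pm' measurableSet_Icc 1 (Or.inr measure_Icc_lt_top.ne)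
    set CI := (eLpNorm ind pm' volume).toReal with hCI_def
    have hCI0 : 0 ≤ CI := ENNReal.toReal_nonneg
    have hIF : ∀ n, n ≥ n1 → ∫ a, F n a ≤ KR * CI := by
      intro n hn
      have h1 : (fun a => F n a * ind a) = fun a => F n a := by
        funext a
        by_cases ha : a ∈ Set.Icc (-M) M
        · rw [hind_def]; simp [Set.indicator_of_mem ha]
        · rw [hind_def]; simp [Set.indicator_of_notMem ha, hsuppF n a ha]
      have h2 := (aux_holder hconj (hFmem n) hind_mem).2
      rw [h1] at h2
      calc ∫ a, F n a ≤ |∫ a, F n a| := le_abs_self _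
        _ ≤ (eLpNorm (F n) pm volume).toReal * CI := h2
        _ ≤ KR * CI := by
            apply mul_le_mul_of_nonneg_right ?_ hCI0
            exact ENNReal.toReal_mono hK_ne_top (hFB n hn)
    set CF := KR * CI + 1 with hCF_def
    have hCF0 : 0 < CF := by nlinarith [mul_nonneg hKR0 hCI0]
    set ε₁ := ε / (2 * (KR + 1)) with hε₁_def
    have hε₁0 : 0 < ε₁ := div_pos hε (by linarith)
    obtain ⟨φ, hφsupp, hφsub, hφcont, hφmem⟩ :=
      hg.exists_hasCompactSupport_eLpNorm_sub_le hpm'_ne_top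
        (ε := ENNReal.ofReal ε₁) (ENNReal.ofReal_pos.mpr hε₁0).ne'
    have hφuc : UniformContinuous φ := hφsupp.uniformContinuous_of_continuous hφcont
    set ε₂ := ε / (4 * CF) with hε₂_def
    have hε₂0 : 0 < ε₂ := div_pos hε (by linarith)
    obtain ⟨δ, hδ0, hδ⟩ := Metric.uniformContinuous_iff.mp hφuc ε₂ hε₂0
    obtain ⟨n2, hn2⟩ := hosc (δ / 2) (by linarith)
    refine ⟨max n1 n2, fun n hn => ?_⟩
    have hn1' : n ≥ n1 := le_trans (le_max_left _ _) hn
    have hn2' : n ≥ n2 := le_trans (le_max_right _ _) hn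
    -- per-interval functions
    set ψ : ℕ → ℝ → ℝ := fun i => (Set.Ioo (B (t n i)) (B (t n (i + 1)))).indicator
      (fun x => |B (t n (i + 1)) - x| ^ p - H * |B (t n (i + 1)) - B (t n i)| ^ p) with hψ_def
    set tF : ℕ → ℝ → ℝ := fun i => (Set.Ioo (B (t n i)) (B (t n (i + 1)))).indicator
      (fun _ => |B (t n (i + 1)) - B (t n i)| ^ p) with htF_def
    have htF_int : ∀ i, Integrable (tF i) volume := fun i =>
      memLp_one_iff_integrable.mp
        (memLp_indicator_const 1 measurableSet_Ioo _ (Or.inr (hioo_fin _ _)))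
    have htF0 : ∀ i a, 0 ≤ tF i a := by
      intro i a
      simp only [htF_def]
      exact Set.indicator_nonneg (fun _ _ => Real.rpow_nonneg (abs_nonneg _) _) a
    have hψ_abs : ∀ i a, |ψ i a| ≤ 2 * tF i a := by
      intro i a
      simp only [hψ_def, htF_def]
      by_cases ha : a ∈ Set.Ioo (B (t n i)) (B (t n (i + 1)))
      · rw [Set.indicator_of_mem ha, Set.indicator_of_mem ha]
        have h1 : |B (t n (i + 1)) - a| ^ p ≤ |B (t n (i + 1)) - B (t n i)| ^ p := by
          apply Real.rpow_le_rpow (abs_nonneg _) ?_ hp0.le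
          rw [abs_of_pos (by linarith [ha.2] : (0:ℝ) < B (t n (i + 1)) - a)]
          calc B (t n (i + 1)) - a ≤ B (t n (i + 1)) - B (t n i) := by linarith [ha.1]
            _ ≤ |B (t n (i + 1)) - B (t n i)| := le_abs_self _
        have h2 : (0:ℝ) ≤ |B (t n (i + 1)) - a| ^ p := Real.rpow_nonneg (abs_nonneg _) _
        have h3 : (0:ℝ) ≤ |B (t n (i + 1)) - B (t n i)| ^ p := Real.rpow_nonneg (abs_nonneg _) _
        have h4 : 0 ≤ H * |B (t n (i + 1)) - B (t n i)| ^ p := mul_nonneg hH0.le h3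
        have h5 : H * |B (t n (i + 1)) - B (t n i)| ^ p ≤ |B (t n (i + 1)) - B (t n i)| ^ p :=
          mul_le_of_le_one_left h3 hH1.le
        rw [abs_le]
        constructor <;> linarith
      · rw [Set.indicator_of_notMem ha, Set.indicator_of_notMem ha]
        simp
    have hψ_meas : ∀ i, Measurable (ψ i) := by
      intro i
      simp only [hψ_def]
      exact (((hcontL _).sub continuous_const).measurable).indicator measurableSet_Ioo
    have hψ_int : ∀ i, Integrable (ψ i) volume := fun i =>
      Integrable.mono' ((htF_int i).const_mul 2) (hψ_meas i).aestronglyMeasurable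
        (Eventually.of_forall fun a => by rw [Real.norm_eq_abs]; exact hψ_abs i a)
    have hψ0 : ∀ i, ∫ a, ψ i a = 0 := by
      intro i
      simp only [hψ_def]
      exact aux_psi_integral hp0 hHp _ _
    have hLHF : ∀ a, L n a - H * F n a = ∑ i ∈ Finset.range (N n), ψ i a := by
      intro a
      simp only [hL_def, hF_def, hψ_def]
      rw [Finset.mul_sum, ← Finset.sum_sub_distrib]
      apply Finset.sum_congr rfl
      intro i _
      by_cases hcond : B (t n i) < a ∧ a < B (t n (i + 1))
      · rw [if_pos hcond, if_pos hcond, Set.indicator_of_mem (Set.mem_Ioo.mpr hcond)]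
      · rw [if_neg hcond, if_neg hcond,
          Set.indicator_of_notMem (fun hmem => hcond (Set.mem_Ioo.mp hmem))]
        ring
    obtain ⟨Cφ, hCφ⟩ := hφcont.bounded_above_of_compact_support hφsupp
    have hψφ_int : ∀ i, Integrable (fun a => ψ i a * φ a) volume := by
      intro i
      have h := Integrable.bdd_mul (hψ_int i) hφcont.aestronglyMeasurable (Eventually.of_forall hCφ)
      simpa [mul_comm] using h
    have hper : ∀ i ∈ Finset.range (N n), |∫ a, ψ i a * φ a| ≤ ε₂ * (2 * ∫ a, tF i a) := by
      intro i hi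
      have hiN : i < N n := Finset.mem_range.mp hi
      set c := φ (B (t n (i + 1))) with hc_def
      have hint3 : Integrable (fun a => ψ i a * (φ a - c)) volume := by
        rw [show (fun a => ψ i a * (φ a - c)) = fun a => ψ i a * φ a - c * ψ i a
          from funext fun a => by ring]
        exact (hψφ_int i).sub ((hψ_int i).const_mul c)
      have h1 : ∫ a, ψ i a * φ a = ∫ a, ψ i a * (φ a - c) := by
        rw [show (fun a => ψ i a * (φ a - c)) = fun a => ψ i a * φ a - c * ψ i a
          from funext fun a => by ring]
        rw [integral_sub (hψφ_int i) ((hψ_int i).const_mul c), integral_const_mul,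
          hψ0 i, mul_zero, sub_zero]
      rw [h1]
      have h2 : ∀ a, |ψ i a * (φ a - c)| ≤ ε₂ * (2 * tF i a) := by
        intro a
        by_cases ha : a ∈ Set.Ioo (B (t n i)) (B (t n (i + 1)))
        · have hφ_close : |φ a - c| ≤ ε₂ := by
            apply le_of_lt
            rw [hc_def]
            have hdist : dist a (B (t n (i + 1))) < δ := by
              rw [Real.dist_eq]
              have hosc_i := hn2 n hn2' i hiN
              have h5 : B (t n i) < a := ha.1
              have h6 : a < B (t n (i + 1)) := ha.2
              calc |a - B (t n (i + 1))| = B (t n (i + 1)) - a := by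
                    rw [abs_of_neg (by linarith)]; ring
                _ < B (t n (i + 1)) - B (t n i) := by linarith
                _ ≤ |B (t n (i + 1)) - B (t n i)| := le_abs_self _
                _ ≤ δ / 2 := hosc_i
                _ < δ := by linarith
            have h7 := hδ hdist
            rw [Real.dist_eq] at h7
            exact h7
          calc |ψ i a * (φ a - c)| = |ψ i a| * |φ a - c| := abs_mul _ _
            _ ≤ (2 * tF i a) * ε₂ := by
                apply mul_le_mul (hψ_abs i a) hφ_close (abs_nonneg _)
                linarith [htF0 i a]
            _ = ε₂ * (2 * tF i a) := by ring
        · simp only [hψ_def]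
          rw [Set.indicator_of_notMem ha, zero_mul, abs_zero]
          have := htF0 i a
          nlinarith [hε₂0]
      calc |∫ a, ψ i a * (φ a - c)| ≤ ∫ a, |ψ i a * (φ a - c)| := by
            simpa only [Real.norm_eq_abs] using
              norm_integral_le_integral_norm (μ := volume) (fun a => ψ i a * (φ a - c))
        _ ≤ ∫ a, ε₂ * (2 * tF i a) := by
            apply integral_mono hint3.abs (((htF_int i).const_mul 2).const_mul ε₂) h2
        _ = ε₂ * (2 * ∫ a, tF i a) := by rw [integral_const_mul, integral_const_mul]
    have hFtF : ∀ a, F n a = ∑ i ∈ Finset.range (N n), tF i a := by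
      intro a
      rw [hFif n a]
    have hFint_eq : ∫ a, F n a = ∑ i ∈ Finset.range (N n), ∫ a, tF i a := by
      calc ∫ a, F n a = ∫ a, ∑ i ∈ Finset.range (N n), tF i a := by
            congr 1; funext a; exact hFtF a
        _ = ∑ i ∈ Finset.range (N n), ∫ a, tF i a :=
            integral_finset_sum _ fun i _ => htF_int i
    have hmemLHF : MemLp (fun a => L n a - H * F n a) pm volume :=
      (hLmem n).sub ((hFmem n).const_mul H)
    have hmemgφ : MemLp (fun a => g a - φ a) pm' volume := hg.sub hφmem
    have hT2 : |∫ a, (L n a - H * F n a) * φ a| ≤ ε / 2 := by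
      have h1 : (fun a => (L n a - H * F n a) * φ a)
          = fun a => ∑ i ∈ Finset.range (N n), ψ i a * φ a :=
        funext fun a => by rw [hLHF a, Finset.sum_mul]
      rw [h1, integral_finset_sum _ fun i _ => hψφ_int i]
      calc |∑ i ∈ Finset.range (N n), ∫ a, ψ i a * φ a|
          ≤ ∑ i ∈ Finset.range (N n), |∫ a, ψ i a * φ a| := Finset.abs_sum_le_sum_abs _ _
        _ ≤ ∑ i ∈ Finset.range (N n), ε₂ * (2 * ∫ a, tF i a) := Finset.sum_le_sum hper
        _ = 2 * ε₂ * ∫ a, F n a := by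
            rw [hFint_eq, Finset.mul_sum]
            apply Finset.sum_congr rfl
            intro i _
            ring
        _ ≤ 2 * ε₂ * CF := by
            apply mul_le_mul_of_nonneg_left ?_ (by linarith)
            calc ∫ a, F n a ≤ KR * CI := hIF n hn1'
              _ ≤ CF := by rw [hCF_def]; linarith
        _ ≤ ε / 2 := by
            rw [hε₂_def]
            rw [show 2 * (ε / (4 * CF)) * CF = (2 * ε * CF) / (4 * CF) from by ring]
            rw [div_le_div_iff₀ (by linarith) (by norm_num : (0:ℝ) < 2)]
            nlinarith [hε.le, hCF0]
    have hT1 : |∫ a, (L n a - H * F n a) * (g a - φ a)| ≤ ε / 2 := by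
      have h1 := (aux_holder hconj hmemLHF hmemgφ).2
      refine h1.trans ?_
      have h2 : (eLpNorm (fun a => L n a - H * F n a) pm volume).toReal ≤ KR :=
        ENNReal.toReal_mono hK_ne_top (hLHFB n hn1')
      have h3 : (eLpNorm (fun a => g a - φ a) pm' volume).toReal ≤ ε₁ := by
        have h4 : eLpNorm (fun a => g a - φ a) pm' volume ≤ ENNReal.ofReal ε₁ := by
          rw [show (fun a => g a - φ a) = g - φ from rfl]
          exact hφsub
        calc (eLpNorm (fun a => g a - φ a) pm' volume).toReal
            ≤ (ENNReal.ofReal ε₁).toReal := ENNReal.toReal_mono ENNReal.ofReal_ne_top h4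
          _ = ε₁ := ENNReal.toReal_ofReal hε₁0.le
      calc (eLpNorm (fun a => L n a - H * F n a) pm volume).toReal
            * (eLpNorm (fun a => g a - φ a) pm' volume).toReal
          ≤ KR * ε₁ := mul_le_mul h2 h3 ENNReal.toReal_nonneg hKR0
        _ ≤ ε / 2 := by
            rw [hε₁_def]
            rw [show KR * (ε / (2 * (KR + 1))) = (KR * ε) / (2 * (KR + 1)) from by ring]
            rw [div_le_div_iff₀ (by linarith) (by norm_num : (0:ℝ) < 2)]
            nlinarith [hε.le, hKR0]
    have hsplit : (∫ a, L n a * g a) - H * ∫ a, F n a * g a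
        = (∫ a, (L n a - H * F n a) * (g a - φ a)) + ∫ a, (L n a - H * F n a) * φ a := by
      have hLg := (aux_holder hconj (hLmem n) hg).1
      have hFg := (aux_holder hconj (hFmem n) hg).1
      have hI1 := (aux_holder hconj hmemLHF hmemgφ).1
      have hI2 := (aux_holder hconj hmemLHF hφmem).1
      rw [show H * ∫ a, F n a * g a = ∫ a, H * (F n a * g a) from (integral_const_mul H _).symm]
      rw [← integral_sub hLg (hFg.const_mul H), ← integral_add hI1 hI2]
      congr 1; funext a; ring
    rw [hsplit]
    calc |(∫ a, (L n a - H * F n a) * (g a - φ a)) + ∫ a, (L n a - H * F n a) * φ a|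
        ≤ |∫ a, (L n a - H * F n a) * (g a - φ a)| + |∫ a, (L n a - H * F n a) * φ a| :=
          abs_add_le _ _
      _ ≤ ε / 2 + ε / 2 := add_le_add hT1 hT2
      _ = ε := by ring
  -- conclude
  have hB0 : Tendsto (fun n => (∫ a, L n a * g a) - H * ∫ a, F n a * g a) atTop (nhds 0) := by
    rw [Metric.tendsto_atTop]
    intro ε hε
    obtain ⟨n0, hn0⟩ := key (ε / 2) (by linarith)
    refine ⟨n0, fun n hn => ?_⟩
    rw [Real.dist_eq, sub_zero]
    exact lt_of_le_of_lt (hn0 n hn) (by linarith)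
  have hfinal := hB0.add (hA.const_mul H)
  rw [zero_add] at hfinal
  have heq : (fun n => ((∫ a, L n a * g a) - H * ∫ a, F n a * g a) + H * ∫ a, F n a * g a)
      = fun n => ∫ a, L n a * g a := funext fun n => by ring
  rw [heq] at hfinal
  exact hfinal
end
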